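/- arXiv:1103.4391 — 5 statements merged into one kernel-verified Lean document; each statement's English description precedes it below -/
import Mathlib

section
/- The set of polynomial families of h-invariant elements modulo the ideals I_t is closed under multiplication. Precisely: suppose u, v : K → U(g) are polynomial maps, i.e. u(t) = Σ_{k=0}^n t^k a_k and v(t) = Σ_{k=0}^m t^k b_k for fixed a_k, b_k ∈ U(g), such that for every t ∈ K and every H ∈ h one has ι(H)·u(t) − u(t)·ι(H) ∈ I_t and ι(H)·v(t) − v(t)·ι(H) ∈ I_t. Then there exists a polynomial map w : K → U(g), w(t) = Σ_{k=0}^N t^k c_k with all c_k ∈ M, such that for every t ∈ K: w(t) − u(t)·v(t) ∈ I_t, and ι(H)·w(t) − w(t)·ι(H) ∈ I_t for every H ∈ h. (Paper's Lemma 6.4: P_(t)((U(g)/U(g)h_{tλ})^h) is an algebra.) -/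
/-!
Statement 0 (paper's Lemma 6.4): the polynomial families of `h`-invariant elements
modulo the ideals `I_t` are closed under multiplication.
-/

noncomputable section

open UniversalEnvelopingAlgebra

/-- The left ideal `I_t = U(g)·h_{tλ}` of `U(g)` generated by the elements
`ι(H) + t·λ(H)·1`, `H ∈ h`. -/
def It {g : Type*} [LieRing g] [LieAlgebra ℝ g] (h : LieSubalgebra ℝ g)
    (lam : h →ₗ[ℝ] ℝ) (t : ℝ) : Ideal (UniversalEnvelopingAlgebra ℝ g) :=
  Ideal.span {x | ∃ H : h, x = ι ℝ (H : g) + (t * lam H) • 1}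

/-- The linear span `M` of the ordered monomials `ι(Q₁)^{α₁} ⋯ ι(Q_p)^{α_p}`, `α ∈ ℕ^p`,
in the basis `Q` of the complement `q`. -/
def Mspan {g : Type*} [LieRing g] [LieAlgebra ℝ g] {q : Submodule ℝ g} {p : ℕ}
    (Q : Module.Basis (Fin p) ℝ q) : Submodule ℝ (UniversalEnvelopingAlgebra ℝ g) :=
  Submodule.span ℝ {u | ∃ α : Fin p → ℕ,
    u = (List.ofFn fun i => (ι ℝ ((Q i : q) : g)) ^ α i).prod}

/-! ### Auxiliary material -/

attribute [local instance] LieRing.ofAssociativeRing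

lemma ofFn_prod_extract {M : Type*} [Monoid M] :
    ∀ {n : ℕ} (f : Fin n → M) (i : Fin n), (∀ j, j < i → f j = 1) →
      (List.ofFn f).prod = f i * (List.ofFn (Function.update f i 1)).prod := by
  intro n
  induction n with
  | zero => exact fun f i => absurd i.2 (by omega)
  | succ n ih =>
    intro f i hi
    rcases Fin.eq_zero_or_eq_succ i with h0 | ⟨j, rfl⟩
    · subst h0
      rw [List.ofFn_succ, List.ofFn_succ, List.prod_cons, List.prod_cons,
        Function.update_self, one_mul]
      congr 1
    · have hf0 : f 0 = 1 := hi 0 (Fin.succ_pos j)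
      have hupd0 : Function.update f j.succ 1 0 = 1 :=
        (Function.update_of_ne (Ne.symm (Fin.succ_ne_zero j)) 1 f).trans hf0
      rw [List.ofFn_succ, List.ofFn_succ, List.prod_cons, List.prod_cons, hf0, hupd0, one_mul,
        one_mul]
      have hcomp : (fun i : Fin n => Function.update f j.succ 1 i.succ)
          = Function.update (fun i : Fin n => f i.succ) j 1 := by
        funext j'
        by_cases hj : j' = j
        · subst hj
          simp [Function.update_self]
        · rw [Function.update_of_ne hj]
          exact Function.update_of_ne (fun hc => hj (Fin.succ_injective n hc)) 1 f
      rw [hcomp]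
      exact ih (fun i => f i.succ) j (fun j' hj' => hi j'.succ (by simpa using hj'))

section WordLemmas

variable {g : Type*} [LieRing g] [LieAlgebra ℝ g]

/-- product of a word of Lie algebra elements inside the enveloping algebra -/
def Pw (L : List g) : UniversalEnvelopingAlgebra ℝ g :=
  (L.map (fun y => (ι ℝ y : UniversalEnvelopingAlgebra ℝ g))).prod

lemma Pw_nil : Pw ([] : List g) = 1 := rfl
lemma Pw_cons (y : g) (L : List g) : Pw (y :: L) = ι ℝ y * Pw L := by simp [Pw]
lemma Pw_append (L₁ L₂ : List g) : Pw (L₁ ++ L₂) = Pw L₁ * Pw L₂ := by simp [Pw]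
lemma Pw_singleton (y : g) : Pw [y] = ι ℝ y := by simp [Pw]

lemma Pw_swap (X Y : List g) (x y : g) :
    Pw (X ++ x :: y :: Y) = Pw (X ++ y :: x :: Y) + Pw (X ++ ⁅x, y⁆ :: Y) := by
  simp only [Pw_append, Pw_cons, LieHom.map_lie, Ring.lie_def]
  noncomm_ring

lemma adjoin_range_ι_top : Algebra.adjoin ℝ (Set.range (ι ℝ : g →ₗ⁅ℝ⁆ _)) = ⊤ := by
  have hT : Algebra.adjoin ℝ (Set.range (TensorAlgebra.ι ℝ (M := g))) = ⊤ := by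
    rw [eq_top_iff]
    rintro x -
    induction x using TensorAlgebra.induction with
    | algebraMap r => exact Subalgebra.algebraMap_mem _ r
    | ι x => exact Algebra.subset_adjoin ⟨x, rfl⟩
    | mul a b ha hb => exact mul_mem ha hb
    | add a b ha hb => exact add_mem ha hb
  rw [eq_top_iff]
  rintro x -
  obtain ⟨y, rfl⟩ : ∃ y, mkAlgHom ℝ g y = x := ⟨Quot.out x, Quot.out_eq x⟩
  have : y ∈ Algebra.adjoin ℝ (Set.range (TensorAlgebra.ι ℝ (M := g))) := hT ▸ trivial
  have h2 := Subalgebra.mem_map (f := mkAlgHom ℝ g)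
    (S := Algebra.adjoin ℝ (Set.range (TensorAlgebra.ι ℝ (M := g)))) |>.2 ⟨y, this, rfl⟩
  rw [AlgHom.map_adjoin] at h2
  refine Algebra.adjoin_mono ?_ h2
  rintro z ⟨w, ⟨v, rfl⟩, rfl⟩
  exact ⟨v, rfl⟩

lemma list_prod_mem_span_words (l : List (UniversalEnvelopingAlgebra ℝ g))
    (hl : ∀ y ∈ l, ∃ z : g, y = ι ℝ z) :
    l.prod ∈ Submodule.span ℝ {u | ∃ L : List g, u = Pw L} := by
  induction l with
  | nil => exact Submodule.subset_span ⟨[], rfl⟩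
  | cons a l ih =>
    obtain ⟨z, rfl⟩ := hl a (List.mem_cons_self)
    have hm := ih (fun b hb => hl b (List.mem_cons_of_mem _ hb))
    rw [List.prod_cons]
    refine Submodule.span_induction ?_ ?_ ?_ ?_ hm
    · rintro u ⟨L, rfl⟩
      exact Submodule.subset_span ⟨z :: L, (Pw_cons z L).symm⟩
    · rw [mul_zero]; exact Submodule.zero_mem _
    · intro u v _ _ hu hv
      rw [mul_add]; exact Submodule.add_mem _ hu hv
    · intro r u _ hu
      rw [mul_smul_comm]; exact Submodule.smul_mem _ r hu

lemma mem_span_words (x : UniversalEnvelopingAlgebra ℝ g) :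
    x ∈ Submodule.span ℝ {u | ∃ L : List g, u = Pw L} := by
  have hx : x ∈ Subalgebra.toSubmodule (Algebra.adjoin ℝ (Set.range (ι ℝ : g →ₗ⁅ℝ⁆ _))) := by
    rw [adjoin_range_ι_top]; trivial
  rw [Algebra.adjoin_eq_span] at hx
  refine Submodule.span_induction ?_ (Submodule.zero_mem _)
    (fun u v _ _ hu hv => Submodule.add_mem _ hu hv)
    (fun r u _ hu => Submodule.smul_mem _ r hu) hx
  intro u hu
  obtain ⟨l, hl, rfl⟩ := Submonoid.exists_list_of_mem_closure hu
  exact list_prod_mem_span_words l (fun y hy => (hl y hy).imp (fun z hz => hz.symm))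

variable {PT : ℕ} (β : Fin PT → g)

def Wn (e : ℕ) : Submodule ℝ (UniversalEnvelopingAlgebra ℝ g) :=
  Submodule.span ℝ {u | ∃ ℓ : List (Fin PT), ℓ.length ≤ e ∧ u = Pw (ℓ.map β)}

def WnS (e : ℕ) : Submodule ℝ (UniversalEnvelopingAlgebra ℝ g) :=
  Submodule.span ℝ
    {u | ∃ ℓ : List (Fin PT), ℓ.Pairwise (· ≤ ·) ∧ ℓ.length ≤ e ∧ u = Pw (ℓ.map β)}

lemma Wn_mono {e e' : ℕ} (hee : e ≤ e') : Wn β e ≤ Wn β e' :=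
  Submodule.span_mono (fun u => by rintro ⟨ℓ, hl, rfl⟩; exact ⟨ℓ, hl.trans hee, rfl⟩)

lemma WnS_mono {e e' : ℕ} (hee : e ≤ e') : WnS β e ≤ WnS β e' :=
  Submodule.span_mono (fun u => by rintro ⟨ℓ, hs, hl, rfl⟩; exact ⟨ℓ, hs, hl.trans hee, rfl⟩)

lemma mul_word (hspan : Submodule.span ℝ (Set.range β) = ⊤) (y : g) (e : ℕ)
    {u : UniversalEnvelopingAlgebra ℝ g} (hu : u ∈ Wn β e) :
    ι ℝ y * u ∈ Wn β (e + 1) := by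
  refine Submodule.span_induction ?_ ?_ ?_ ?_ hu
  · rintro u ⟨ℓ, hl, rfl⟩
    have hy : y ∈ Submodule.span ℝ (Set.range β) := by rw [hspan]; trivial
    refine Submodule.span_induction ?_ ?_ ?_ ?_ hy
    · rintro z ⟨a, rfl⟩
      exact Submodule.subset_span ⟨a :: ℓ, by simpa using hl, by rw [List.map_cons, Pw_cons]⟩
    · rw [map_zero, zero_mul]; exact Submodule.zero_mem _
    · intro z₁ z₂ _ _ h₁ h₂
      rw [map_add, add_mul]; exact Submodule.add_mem _ h₁ h₂
    · intro r z _ hz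
      rw [map_smul, smul_mul_assoc]; exact Submodule.smul_mem _ r hz
  · rw [mul_zero]; exact Submodule.zero_mem _
  · intro u v _ _ h₁ h₂; rw [mul_add]; exact Submodule.add_mem _ h₁ h₂
  · intro r u _ hu'; rw [mul_smul_comm]; exact Submodule.smul_mem _ r hu'

lemma stage1 (hspan : Submodule.span ℝ (Set.range β) = ⊤) (L : List g) :
    Pw L ∈ Wn β L.length := by
  induction L with
  | nil => exact Submodule.subset_span ⟨[], by simp, rfl⟩
  | cons y L ih =>
    rw [Pw_cons]
    exact mul_word β hspan y L.length ih

/-- number of inversions -/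
def invc : List (Fin PT) → ℕ
  | [] => 0
  | a :: l => l.countP (fun b => decide (b < a)) + invc l

lemma invc_swap (x y : Fin PT) (hyx : y < x) :
    ∀ (A : List (Fin PT)) (B : List (Fin PT)),
      invc (A ++ y :: x :: B) + 1 = invc (A ++ x :: y :: B) := by
  intro A B
  induction A with
  | nil =>
    simp only [List.nil_append, invc, List.countP_cons]
    have h1 : decide (y < x) = true := by simpa using hyx
    have h2 : decide (x < y) = false := by simpa using (asymm hyx : ¬ x < y)
    simp [h1, h2]
    omega
  | cons a A ih =>
    have hperm : (A ++ y :: x :: B).Perm (A ++ x :: y :: B) :=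
      List.Perm.append_left A (List.Perm.swap x y B)
    have e1 : invc ((a :: A) ++ y :: x :: B)
        = (A ++ y :: x :: B).countP (fun b => decide (b < a)) + invc (A ++ y :: x :: B) := rfl
    have e2 : invc ((a :: A) ++ x :: y :: B)
        = (A ++ x :: y :: B).countP (fun b => decide (b < a)) + invc (A ++ x :: y :: B) := rfl
    rw [e1, e2, hperm.countP_eq]
    omega

lemma exists_desc {ℓ : List (Fin PT)} (hns : ¬ ℓ.Pairwise (· ≤ ·)) :
    ∃ A B x y, y < x ∧ ℓ = A ++ x :: y :: B := by
  rw [← List.isChain_iff_pairwise, List.isChain_iff_getElem] at hns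
  push_neg at hns
  obtain ⟨i, hi, hlt⟩ := hns
  have hi1 : i + 1 < ℓ.length := by omega
  have hi0 : i < ℓ.length := by omega
  refine ⟨ℓ.take i, ℓ.drop (i + 2), ℓ.get ⟨i, hi0⟩, ℓ.get ⟨i + 1, hi1⟩, hlt, ?_⟩
  conv_lhs => rw [← List.take_append_drop i ℓ]
  congr 1
  rw [List.drop_eq_getElem_cons hi0]
  congr 1
  rw [List.drop_eq_getElem_cons hi1]
  simp

lemma stage2 (hspan : Submodule.span ℝ (Set.range β) = ⊤) :
    ∀ e (ℓ : List (Fin PT)), ℓ.length ≤ e → Pw (ℓ.map β) ∈ WnS β e := by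
  intro e
  induction e using Nat.strong_induction_on with
  | _ e ihe =>
    suffices hinner : ∀ n (ℓ : List (Fin PT)), ℓ.length ≤ e → invc ℓ ≤ n →
        Pw (ℓ.map β) ∈ WnS β e by
      intro ℓ hl
      exact hinner (invc ℓ) ℓ hl le_rfl
    intro n
    induction n with
    | zero =>
      intro ℓ hl hi
      by_cases hs : ℓ.Pairwise (· ≤ ·)
      · exact Submodule.subset_span ⟨ℓ, hs, hl, rfl⟩
      · obtain ⟨A, B, x, y, hyx, rfl⟩ := exists_desc hs
        have := invc_swap x y hyx A B
        omega
    | succ n ihn =>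
      intro ℓ hl hi
      by_cases hs : ℓ.Pairwise (· ≤ ·)
      · exact Submodule.subset_span ⟨ℓ, hs, hl, rfl⟩
      · obtain ⟨A, B, x, y, hyx, rfl⟩ := exists_desc hs
        have hswap := invc_swap x y hyx A B
        have hmap : (A ++ x :: y :: B).map β = A.map β ++ β x :: β y :: B.map β := by
          simp
        have hmap2 : (A ++ y :: x :: B).map β = A.map β ++ β y :: β x :: B.map β := by
          simp
        rw [hmap, Pw_swap]
        refine Submodule.add_mem _ ?_ ?_
        · have h1 : Pw ((A ++ y :: x :: B).map β) ∈ WnS β e := by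
            refine ihn (A ++ y :: x :: B) ?_ ?_
            · simp only [List.length_append, List.length_cons] at hl ⊢; omega
            · omega
          rwa [hmap2] at h1
        · have hlen : (A ++ x :: y :: B).length = A.length + B.length + 2 := by simp; omega
          have hword : Pw (A.map β ++ ⁅β x, β y⁆ :: B.map β)
              ∈ Wn (β := β) (A.map β ++ ⁅β x, β y⁆ :: B.map β).length := stage1 β hspan _
          have hlen2 : (A.map β ++ ⁅β x, β y⁆ :: B.map β).length ≤ e - 1 := by
            simp only [List.length_append, List.length_cons, List.length_map]
            rw [hlen] at hl; omega
          have h2 : Pw (A.map β ++ ⁅β x, β y⁆ :: B.map β) ∈ Wn β (e - 1) :=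
            Wn_mono β hlen2 hword
          have h3 : Wn β (e - 1) ≤ WnS β (e - 1) := by
            rw [Wn, Submodule.span_le]
            rintro u ⟨ℓ'', hl'', rfl⟩
            exact ihe (e - 1) (by omega) ℓ'' hl''
          exact WnS_mono β (by omega) (h3 h2)

lemma mem_span_sorted_words (hspan : Submodule.span ℝ (Set.range β) = ⊤)
    (x : UniversalEnvelopingAlgebra ℝ g) :
    x ∈ Submodule.span ℝ
      {u | ∃ ℓ : List (Fin PT), ℓ.Pairwise (· ≤ ·) ∧ u = Pw (ℓ.map β)} := by
  have hx := mem_span_words x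
  refine Submodule.span_induction ?_ (Submodule.zero_mem _)
    (fun u v _ _ hu hv => Submodule.add_mem _ hu hv)
    (fun r u _ hu => Submodule.smul_mem _ r hu) hx
  rintro u ⟨L, rfl⟩
  have h1 := stage1 β hspan L
  have h2 : Wn β L.length ≤ WnS β L.length := by
    rw [Wn, Submodule.span_le]
    rintro u ⟨ℓ'', hl'', rfl⟩
    exact stage2 β hspan L.length ℓ'' hl''
  have h3 : WnS β L.length ≤ Submodule.span ℝ
      {u | ∃ ℓ : List (Fin PT), ℓ.Pairwise (· ≤ ·) ∧ u = Pw (ℓ.map β)} := by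
    rw [WnS, Submodule.span_le]
    rintro u ⟨ℓ'', hs'', _, rfl⟩
    exact Submodule.subset_span ⟨ℓ'', hs'', rfl⟩
  exact h3 (h2 h1)

end WordLemmas

section ItLemmas

variable {g : Type*} [LieRing g] [LieAlgebra ℝ g] (h : LieSubalgebra ℝ g) (lam : h →ₗ[ℝ] ℝ)

lemma gen_mem (t : ℝ) (H : h) : ι ℝ (H : g) + (t * lam H) • 1 ∈ It h lam t :=
  Submodule.subset_span ⟨H, rfl⟩

lemma mul_gen_mem (x : UniversalEnvelopingAlgebra ℝ g) (t : ℝ) (H : h) :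
    x * (ι ℝ (H : g) + (t * lam H) • 1) ∈ It h lam t :=
  (It h lam t).mul_mem_left x (gen_mem h lam t H)

lemma It_mul_H (hlam : ∀ H₁ H₂ : h, lam ⁅H₁, H₂⁆ = 0) (t : ℝ) (H : h)
    {x : UniversalEnvelopingAlgebra ℝ g} (hx : x ∈ It h lam t) :
    x * ι ℝ (H : g) ∈ It h lam t := by
  refine Submodule.span_induction ?_ ?_ ?_ ?_ hx
  · rintro s ⟨H₁, rfl⟩
    have key : (ι ℝ (H₁ : g) + (t * lam H₁) • 1) * ι ℝ (H : g)
        = ι ℝ (H : g) * (ι ℝ (H₁ : g) + (t * lam H₁) • 1)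
          + (ι ℝ ((⁅H₁, H⁆ : h) : g) + (t * lam ⁅H₁, H⁆) • 1) := by
      rw [hlam H₁ H, LieSubalgebra.coe_bracket, LieHom.map_lie, Ring.lie_def]
      simp only [mul_zero, zero_smul, add_zero, add_mul, mul_add, smul_mul_assoc,
        mul_smul_comm, one_mul, mul_one]
      abel
    rw [key]
    exact Submodule.add_mem _ (mul_gen_mem h lam _ t H₁) (gen_mem h lam t _)
  · rw [zero_mul]; exact Submodule.zero_mem _
  · intro u v _ _ hu hv; rw [add_mul]; exact Submodule.add_mem _ hu hv
  · intro r u _ hu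
    rw [smul_eq_mul, mul_assoc]
    exact (It h lam t).mul_mem_left r hu

lemma It_mul_inv (t : ℝ) {v : UniversalEnvelopingAlgebra ℝ g}
    (hv : ∀ H : h, ι ℝ (H : g) * v - v * ι ℝ (H : g) ∈ It h lam t)
    {x : UniversalEnvelopingAlgebra ℝ g} (hx : x ∈ It h lam t) :
    x * v ∈ It h lam t := by
  refine Submodule.span_induction ?_ ?_ ?_ ?_ hx
  · rintro s ⟨H₁, rfl⟩
    have key : (ι ℝ (H₁ : g) + (t * lam H₁) • 1) * v
        = (ι ℝ (H₁ : g) * v - v * ι ℝ (H₁ : g))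
          + v * (ι ℝ (H₁ : g) + (t * lam H₁) • 1) := by
      simp only [add_mul, mul_add, smul_mul_assoc, mul_smul_comm, one_mul, mul_one]
      abel
    rw [key]
    exact Submodule.add_mem _ (hv H₁) (mul_gen_mem h lam v t H₁)
  · rw [zero_mul]; exact Submodule.zero_mem _
  · intro u w _ _ hu hw; rw [add_mul]; exact Submodule.add_mem _ hu hw
  · intro r u _ hu
    rw [smul_eq_mul, mul_assoc]
    exact (It h lam t).mul_mem_left r hu

end ItLemmas

section RedLemmas

variable {g : Type*} [LieRing g] [LieAlgebra ℝ g]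

def Fam (N : ℕ) (c : ℕ → UniversalEnvelopingAlgebra ℝ g) : ℝ → UniversalEnvelopingAlgebra ℝ g :=
  fun t => ∑ k ∈ Finset.range (N + 1), t ^ k • c k

variable {q : Submodule ℝ g} {p : ℕ} (Q : Module.Basis (Fin p) ℝ q)
  (h : LieSubalgebra ℝ g) (lam : h →ₗ[ℝ] ℝ)

/-- `w` is a polynomial family with coefficients in `Mspan Q`. -/
def IsFamM (w : ℝ → UniversalEnvelopingAlgebra ℝ g) : Prop :=
  ∃ N c, (∀ k, c k ∈ Mspan Q) ∧ w = Fam N c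

/-- `f` is reducible: congruent mod `I_t`, for each `t`, to a polynomial family with
coefficients in `Mspan Q`. -/
def Red (f : ℝ → UniversalEnvelopingAlgebra ℝ g) : Prop :=
  ∃ w, IsFamM Q w ∧ ∀ t, w t - f t ∈ It h lam t

lemma Fam_pad (N N' : ℕ) (hNN : N ≤ N') (c : ℕ → UniversalEnvelopingAlgebra ℝ g) :
    Fam N' (fun k => if k ≤ N then c k else 0) = Fam N c := by
  funext t
  rw [Fam, Fam]
  have hsub : Finset.range (N + 1) ⊆ Finset.range (N' + 1) :=
    Finset.range_subset_range.2 (by omega)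
  rw [← Finset.sum_subset hsub (fun k _ hk => by
    rw [if_neg (fun hle => hk (Finset.mem_range.2 (by omega))), smul_zero])]
  exact Finset.sum_congr rfl fun k hk => by
    rw [if_pos (Nat.lt_succ_iff.1 (Finset.mem_range.1 hk))]

lemma IsFamM_const {x : UniversalEnvelopingAlgebra ℝ g} (hx : x ∈ Mspan Q) :
    IsFamM Q (fun _ => x) := by
  refine ⟨0, fun _ => x, fun _ => hx, ?_⟩
  funext t; simp [Fam]

lemma IsFamM_add {w₁ w₂ : ℝ → UniversalEnvelopingAlgebra ℝ g}
    (h₁ : IsFamM Q w₁) (h₂ : IsFamM Q w₂) : IsFamM Q (fun t => w₁ t + w₂ t) := by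
  obtain ⟨N₁, c₁, hc₁, rfl⟩ := h₁
  obtain ⟨N₂, c₂, hc₂, rfl⟩ := h₂
  refine ⟨max N₁ N₂, fun k => (if k ≤ N₁ then c₁ k else 0) + (if k ≤ N₂ then c₂ k else 0),
    fun k => Submodule.add_mem _ (by split <;> simp [hc₁ k]) (by split <;> simp [hc₂ k]), ?_⟩
  funext t
  have e1 := congrFun (Fam_pad N₁ (max N₁ N₂) (le_max_left _ _) c₁) t
  have e2 := congrFun (Fam_pad N₂ (max N₁ N₂) (le_max_right _ _) c₂) t
  rw [← e1, ← e2, Fam, Fam, Fam, ← Finset.sum_add_distrib]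
  exact Finset.sum_congr rfl fun k _ => by rw [smul_add]

lemma IsFamM_smul (r : ℝ) {w : ℝ → UniversalEnvelopingAlgebra ℝ g}
    (hw : IsFamM Q w) : IsFamM Q (fun t => r • w t) := by
  obtain ⟨N, c, hc, rfl⟩ := hw
  refine ⟨N, fun k => r • c k, fun k => Submodule.smul_mem _ r (hc k), ?_⟩
  funext t
  rw [Fam, Fam, Finset.smul_sum]
  exact Finset.sum_congr rfl fun k _ => smul_comm _ _ _

lemma IsFamM_tsmul {w : ℝ → UniversalEnvelopingAlgebra ℝ g}
    (hw : IsFamM Q w) : IsFamM Q (fun t => t • w t) := by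
  obtain ⟨N, c, hc, rfl⟩ := hw
  refine ⟨N + 1, fun k => if k = 0 then 0 else c (k - 1),
    fun k => by by_cases hk : k = 0 <;> simp [hk, hc, Submodule.zero_mem], ?_⟩
  funext t
  rw [Fam, Fam,
    Finset.sum_range_succ' (fun k => t ^ k • if k = 0 then 0 else c (k - 1)) (N + 1),
    Finset.smul_sum]
  simp only [Nat.succ_ne_zero, if_false, Nat.add_sub_cancel, if_true, reduceIte,
    smul_zero, add_zero]
  exact Finset.sum_congr rfl fun k _ => by rw [pow_succ', mul_smul]

lemma Red_of_mem {x : UniversalEnvelopingAlgebra ℝ g} (hx : x ∈ Mspan Q) :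
    Red Q h lam (fun _ => x) :=
  ⟨fun _ => x, IsFamM_const Q hx, fun t => by simpa using Submodule.zero_mem _⟩

lemma Red_zero : Red Q h lam (fun _ => (0 : UniversalEnvelopingAlgebra ℝ g)) :=
  Red_of_mem Q h lam (Submodule.zero_mem _)

lemma Red_add {f₁ f₂ : ℝ → UniversalEnvelopingAlgebra ℝ g}
    (h₁ : Red Q h lam f₁) (h₂ : Red Q h lam f₂) : Red Q h lam (fun t => f₁ t + f₂ t) := by
  obtain ⟨w₁, hw₁, hI₁⟩ := h₁
  obtain ⟨w₂, hw₂, hI₂⟩ := h₂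
  refine ⟨fun t => w₁ t + w₂ t, IsFamM_add Q hw₁ hw₂, fun t => ?_⟩
  show w₁ t + w₂ t - (f₁ t + f₂ t) ∈ It h lam t
  rw [add_sub_add_comm]
  exact Submodule.add_mem _ (hI₁ t) (hI₂ t)

lemma Red_smul (r : ℝ) {f : ℝ → UniversalEnvelopingAlgebra ℝ g}
    (hf : Red Q h lam f) : Red Q h lam (fun t => r • f t) := by
  obtain ⟨w, hw, hI⟩ := hf
  refine ⟨fun t => r • w t, IsFamM_smul Q r hw, fun t => ?_⟩
  show r • w t - r • f t ∈ It h lam t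
  rw [show r • w t - r • f t = r • (w t - f t) from (smul_sub r _ _).symm]
  exact (Submodule.restrictScalars ℝ (It h lam t)).smul_mem r (hI t)

lemma Red_tsmul {f : ℝ → UniversalEnvelopingAlgebra ℝ g}
    (hf : Red Q h lam f) : Red Q h lam (fun t => t • f t) := by
  obtain ⟨w, hw, hI⟩ := hf
  refine ⟨fun t => t • w t, IsFamM_tsmul Q hw, fun t => ?_⟩
  show t • w t - t • f t ∈ It h lam t
  rw [show t • w t - t • f t = t • (w t - f t) from (smul_sub t _ _).symm]
  exact (Submodule.restrictScalars ℝ (It h lam t)).smul_mem t (hI t)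

lemma Red_tpow (d : ℕ) {f : ℝ → UniversalEnvelopingAlgebra ℝ g}
    (hf : Red Q h lam f) : Red Q h lam (fun t => t ^ d • f t) := by
  induction d with
  | zero => simpa using hf
  | succ d ih =>
    have he : (fun t : ℝ => t ^ (d + 1) • f t) = fun t => t • t ^ d • f t := by
      funext t; rw [pow_succ', mul_smul]
    rw [he]
    exact Red_tsmul Q h lam ih

lemma Red_finsetSum {ι : Type*} (s : Finset ι) (F : ι → ℝ → UniversalEnvelopingAlgebra ℝ g)
    (hF : ∀ i ∈ s, Red Q h lam (F i)) :
    Red Q h lam (fun t => ∑ i ∈ s, F i t) := by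
  classical
  induction s using Finset.induction_on with
  | empty => simpa using Red_zero Q h lam
  | insert a s hni ih =>
    simp only [Finset.sum_insert hni]
    exact Red_add Q h lam (hF a (s.mem_insert_self a))
      (ih fun i hi => hF i (Finset.mem_insert_of_mem hi))

lemma Red_mul_H (hlam : ∀ H₁ H₂ : h, lam ⁅H₁, H₂⁆ = 0)
    {f : ℝ → UniversalEnvelopingAlgebra ℝ g} (hf : Red Q h lam f) (H : h) :
    Red Q h lam (fun t => f t * ι ℝ (H : g)) := by
  obtain ⟨w, hw, hI⟩ := hf
  refine ⟨fun t => t • ((-lam H) • w t), IsFamM_tsmul Q (IsFamM_smul Q _ hw), fun t => ?_⟩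
  have A : (w t - f t) * ι ℝ (H : g) ∈ It h lam t := It_mul_H h lam hlam t H (hI t)
  have B : w t * (ι ℝ (H : g) + (t * lam H) • 1) ∈ It h lam t := mul_gen_mem h lam (w t) t H
  have key : t • ((-lam H) • w t) - f t * ι ℝ (H : g)
      = (w t - f t) * ι ℝ (H : g) - (w t * (ι ℝ (H : g) + (t * lam H) • 1)) := by
    simp only [smul_smul, sub_mul, mul_add, mul_smul_comm, mul_one]
    module
  rw [key]
  exact Submodule.sub_mem _ A B

end RedLemmas

section Reduction

variable {g : Type*} [LieRing g] [LieAlgebra ℝ g] (h : LieSubalgebra ℝ g) (lam : h →ₗ[ℝ] ℝ)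
  {q : Submodule ℝ g} {p ph : ℕ} (Q : Module.Basis (Fin p) ℝ q) (Hb : Module.Basis (Fin ph) ℝ h.toSubmodule)

/-- ordered monomial -/
def Mon (α : Fin p → ℕ) : UniversalEnvelopingAlgebra ℝ g :=
  (List.ofFn fun i => (ι ℝ ((Q i : q) : g)) ^ α i).prod

lemma Mon_mem (α : Fin p → ℕ) : Mon Q α ∈ Mspan Q := Submodule.subset_span ⟨α, rfl⟩

lemma Mon_zero : Mon Q (fun _ => 0) = 1 := by
  refine List.prod_eq_one (fun x hx => ?_)
  obtain ⟨i, rfl⟩ := List.mem_ofFn.1 hx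
  exact pow_zero _

lemma Mon_insert (α : Fin p → ℕ) (i : Fin p) (hz : ∀ j, j < i → α j = 0) :
    ι ℝ ((Q i : q) : g) * Mon Q α = Mon Q (Function.update α i (α i + 1)) := by
  set f : Fin p → UniversalEnvelopingAlgebra ℝ g := fun j => (ι ℝ ((Q j : q) : g)) ^ α j with hf
  set f' : Fin p → UniversalEnvelopingAlgebra ℝ g :=
    fun j => (ι ℝ ((Q j : q) : g)) ^ (Function.update α i (α i + 1) j) with hf'
  have h1 : (List.ofFn f).prod = f i * (List.ofFn (Function.update f i 1)).prod :=
    ofFn_prod_extract f i (fun j hj => by simp [hf, hz j hj])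
  have h2 : (List.ofFn f').prod = f' i * (List.ofFn (Function.update f' i 1)).prod := by
    refine ofFn_prod_extract f' i (fun j hj => ?_)
    simp only [hf', Function.update_of_ne (ne_of_lt hj), hz j hj, pow_zero]
  have h3 : Function.update f' i 1 = Function.update f i 1 := by
    funext j
    by_cases hj : j = i
    · subst hj; simp
    · rw [Function.update_of_ne hj, Function.update_of_ne hj, hf, hf']
      simp only [Function.update_of_ne hj]
  have h4 : f' i = ι ℝ ((Q i : q) : g) * f i := by
    simp only [hf', hf, Function.update_self, pow_succ']
  show ι ℝ ((Q i : q) : g) * (List.ofFn f).prod = (List.ofFn f').prod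
  rw [h2, h3, h4, h1, mul_assoc]

lemma sorted_q_mon (ℓ : List (Fin p)) (hs : ℓ.Pairwise (· ≤ ·)) :
    ∃ α : Fin p → ℕ, (∀ j, α j ≠ 0 → j ∈ ℓ) ∧
      (ℓ.map (fun i => (ι ℝ ((Q i : q) : g) : UniversalEnvelopingAlgebra ℝ g))).prod
        = Mon Q α := by
  induction ℓ with
  | nil => exact ⟨fun _ => 0, by simp, by simpa using (Mon_zero Q).symm⟩
  | cons i ℓ ih =>
    obtain ⟨α, hsupp, hα⟩ := ih hs.of_cons
    have hle : ∀ b ∈ ℓ, i ≤ b := fun b hb => List.rel_of_pairwise_cons hs hb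
    have hz : ∀ j, j < i → α j = 0 := by
      intro j hj
      by_contra hne
      exact absurd (hle j (hsupp j hne)) (not_le.2 hj)
    refine ⟨Function.update α i (α i + 1), ?_, ?_⟩
    · intro j hj
      by_cases hji : j = i
      · exact hji ▸ List.mem_cons_self
      · rw [Function.update_of_ne hji] at hj
        exact List.mem_cons_of_mem _ (hsupp j hj)
    · rw [List.map_cons, List.prod_cons, hα, Mon_insert Q α i hz]

def βfun : Fin (p + ph) → g :=
  Fin.addCases (fun i => ((Q i : q) : g)) (fun j => ((Hb j : h.toSubmodule) : g))

lemma span_beta (hq : IsCompl h.toSubmodule q) :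
    Submodule.span ℝ (Set.range (βfun h Q Hb)) = ⊤ := by
  rw [eq_top_iff, ← codisjoint_iff.1 hq.codisjoint]
  refine sup_le ?_ ?_
  · intro x hx
    have hrep := Hb.sum_repr ⟨x, hx⟩
    have hx2 : x = ∑ j, (Hb.repr ⟨x, hx⟩) j • ((Hb j : h.toSubmodule) : g) := by
      exact (congrArg Subtype.val hrep).symm.trans
        (by simp only [AddSubmonoidClass.coe_finset_sum, SetLike.val_smul])
    rw [hx2]
    refine Submodule.sum_mem _ (fun j _ => Submodule.smul_mem _ _ (Submodule.subset_span ?_))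
    exact ⟨Fin.natAdd p j, by rw [βfun, Fin.addCases_right]⟩
  · intro x hx
    have hrep := Q.sum_repr ⟨x, hx⟩
    have hx2 : x = ∑ i, (Q.repr ⟨x, hx⟩) i • ((Q i : q) : g) := by
      exact (congrArg Subtype.val hrep).symm.trans
        (by simp only [AddSubmonoidClass.coe_finset_sum, SetLike.val_smul])
    rw [hx2]
    refine Submodule.sum_mem _ (fun i _ => Submodule.smul_mem _ _ (Submodule.subset_span ?_))
    exact ⟨Fin.castAdd ph i, by rw [βfun, Fin.addCases_left]⟩

lemma all_lt_to_q : ∀ (ℓ : List (Fin (p + ph))), (∀ b ∈ ℓ, (b : ℕ) < p) →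
    ∃ ℓq : List (Fin p), ℓ = ℓq.map (Fin.castAdd ph) := by
  intro ℓ
  induction ℓ with
  | nil => exact fun _ => ⟨[], rfl⟩
  | cons a ℓ ih =>
    intro hb
    obtain ⟨ℓq, rfl⟩ := ih (fun b hb' => hb b (List.mem_cons_of_mem _ hb'))
    have ha : (a : ℕ) < p := hb a (List.mem_cons_self)
    refine ⟨⟨a, ha⟩ :: ℓq, ?_⟩
    rw [List.map_cons]
    congr 1

lemma red_sorted (hlam : ∀ H₁ H₂ : h, lam ⁅H₁, H₂⁆ = 0)
    (ℓ : List (Fin (p + ph))) (hs : ℓ.Pairwise (· ≤ ·)) :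
    Red Q h lam (fun _ => Pw (ℓ.map (βfun h Q Hb))) := by
  induction ℓ using List.reverseRecOn with
  | nil =>
    refine Red_of_mem Q h lam ?_
    rw [List.map_nil, Pw_nil, ← Mon_zero Q]
    exact Mon_mem Q _
  | append_singleton ℓ a ih =>
    have hs' : ℓ.Pairwise (· ≤ ·) := hs.sublist (List.sublist_append_left _ _)
    rcases lt_or_ge (a : ℕ) p with hap | hap
    · -- last letter is a q-letter: all letters are q-letters
      have hall : ∀ b ∈ ℓ ++ [a], (b : ℕ) < p := by
        intro b hb
        rcases List.mem_append.1 hb with hb | hb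
        · have hba : b ≤ a :=
            (List.pairwise_append.1 hs).2.2 b hb a (List.mem_singleton_self a)
          exact lt_of_le_of_lt hba hap
        · rw [List.mem_singleton.1 hb]; exact hap
      obtain ⟨ℓq, heq⟩ := all_lt_to_q (ℓ ++ [a]) hall
      have hsq : ℓq.Pairwise (· ≤ ·) := by
        rw [heq, List.pairwise_map] at hs
        exact hs.imp (fun hab => by
          rw [Fin.le_def] at hab ⊢
          exact hab)
      obtain ⟨α, -, hmon⟩ := sorted_q_mon Q ℓq hsq
      refine Red_of_mem Q h lam ?_
      rw [heq, List.map_map]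
      have hcomp : (βfun h Q Hb) ∘ (Fin.castAdd ph) = fun i : Fin p => ((Q i : q) : g) := by
        funext i
        simp [βfun, Fin.addCases_left]
      rw [hcomp]
      simp only [Pw, List.map_map]
      have hmm : List.map ((fun y => (ι ℝ y : UniversalEnvelopingAlgebra ℝ g))
            ∘ fun i : Fin p => ((Q i : q) : g)) ℓq
          = List.map (fun i : Fin p =>
              (ι ℝ ((Q i : q) : g) : UniversalEnvelopingAlgebra ℝ g)) ℓq := rfl
      rw [hmm, hmon]
      exact Mon_mem Q α
    · -- last letter is an h-letter
      obtain ⟨j, rfl⟩ : ∃ j : Fin ph, a = Fin.natAdd p j :=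
        ⟨⟨(a : ℕ) - p, by omega⟩, by apply Fin.ext; simp; omega⟩
      have hmemh : ((Hb j : h.toSubmodule) : g) ∈ h := (Hb j).2
      set H : h := ⟨((Hb j : h.toSubmodule) : g), hmemh⟩ with hH
      have hPw : (fun _ : ℝ => Pw ((ℓ ++ [Fin.natAdd p j]).map (βfun h Q Hb)))
          = fun t : ℝ => (fun _ : ℝ => Pw (ℓ.map (βfun h Q Hb))) t * ι ℝ (H : g) := by
        funext t
        rw [List.map_append, Pw_append, List.map_singleton, Pw_singleton]
        congr 2
        rw [βfun, Fin.addCases_right]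
      rw [hPw]
      exact Red_mul_H Q h lam hlam (ih hs') H

lemma Red_const_all [FiniteDimensional ℝ g] (hlam : ∀ H₁ H₂ : h, lam ⁅H₁, H₂⁆ = 0)
    (hq : IsCompl h.toSubmodule q) (x : UniversalEnvelopingAlgebra ℝ g) :
    Red Q h lam (fun _ => x) := by
  let Hb : Module.Basis (Fin (Module.finrank ℝ h.toSubmodule)) ℝ h.toSubmodule :=
    Module.finBasis ℝ h.toSubmodule
  have hx := mem_span_sorted_words (βfun h Q Hb) (span_beta h Q Hb hq) x
  refine Submodule.span_induction ?_ ?_ ?_ ?_ hx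
  · rintro u ⟨ℓ, hsort, rfl⟩
    exact red_sorted h lam Q Hb hlam ℓ hsort
  · exact Red_zero Q h lam
  · intro u v _ _ hu hv
    exact Red_add Q h lam hu hv
  · intro r u _ hu
    exact Red_smul Q h lam r hu

end Reduction

theorem stmt0 (g : Type*) [LieRing g] [LieAlgebra ℝ g] [FiniteDimensional ℝ g]
    (h : LieSubalgebra ℝ g) (lam : h →ₗ[ℝ] ℝ)
    (hlam : ∀ H₁ H₂ : h, lam ⁅H₁, H₂⁆ = 0)
    (q : Submodule ℝ g) (hq : IsCompl h.toSubmodule q)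
    (p : ℕ) (Q : Module.Basis (Fin p) ℝ q)
    (n m : ℕ) (a b : ℕ → UniversalEnvelopingAlgebra ℝ g)
    (hu : ∀ (t : ℝ) (H : h),
      ι ℝ (H : g) * (∑ k ∈ Finset.range (n + 1), t ^ k • a k)
        - (∑ k ∈ Finset.range (n + 1), t ^ k • a k) * ι ℝ (H : g) ∈ It h lam t)
    (hv : ∀ (t : ℝ) (H : h),
      ι ℝ (H : g) * (∑ k ∈ Finset.range (m + 1), t ^ k • b k)
        - (∑ k ∈ Finset.range (m + 1), t ^ k • b k) * ι ℝ (H : g) ∈ It h lam t) :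
    ∃ (N : ℕ) (c : ℕ → UniversalEnvelopingAlgebra ℝ g),
      (∀ k, c k ∈ Mspan Q) ∧
      ∀ t : ℝ,
        ((∑ k ∈ Finset.range (N + 1), t ^ k • c k)
            - (∑ k ∈ Finset.range (n + 1), t ^ k • a k)
              * (∑ k ∈ Finset.range (m + 1), t ^ k • b k) ∈ It h lam t) ∧
        ∀ H : h,
          ι ℝ (H : g) * (∑ k ∈ Finset.range (N + 1), t ^ k • c k)
            - (∑ k ∈ Finset.range (N + 1), t ^ k • c k) * ι ℝ (H : g) ∈ It h lam t := by
  -- the product is a reducible family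
  have hsum : (fun t : ℝ => (∑ j ∈ Finset.range (n + 1), t ^ j • a j)
        * (∑ k ∈ Finset.range (m + 1), t ^ k • b k))
      = fun t : ℝ => ∑ j ∈ Finset.range (n + 1), ∑ k ∈ Finset.range (m + 1),
          t ^ (j + k) • (a j * b k) := by
    funext t
    rw [Finset.sum_mul_sum]
    exact Finset.sum_congr rfl fun j _ => Finset.sum_congr rfl fun k _ => by
      rw [smul_mul_smul_comm, pow_add]
  have hprod : Red Q h lam (fun t : ℝ => (∑ j ∈ Finset.range (n + 1), t ^ j • a j)
      * (∑ k ∈ Finset.range (m + 1), t ^ k • b k)) := by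
    rw [hsum]
    refine Red_finsetSum Q h lam _ _ (fun j _ => ?_)
    refine Red_finsetSum Q h lam _ _ (fun k _ => ?_)
    exact Red_tpow Q h lam (j + k) (Red_const_all h lam Q hlam hq (a j * b k))
  obtain ⟨w, ⟨N, c, hc, rfl⟩, hIt⟩ := hprod
  refine ⟨N, c, hc, fun t => ⟨hIt t, fun H => ?_⟩⟩
  -- invariance
  set uu : UniversalEnvelopingAlgebra ℝ g := ∑ k ∈ Finset.range (n + 1), t ^ k • a k with huu
  set vv : UniversalEnvelopingAlgebra ℝ g := ∑ k ∈ Finset.range (m + 1), t ^ k • b k with hvv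
  set ww : UniversalEnvelopingAlgebra ℝ g := ∑ k ∈ Finset.range (N + 1), t ^ k • c k with hww
  have hD : ww - uu * vv ∈ It h lam t := hIt t
  have m1 : ι ℝ (H : g) * (ww - uu * vv) ∈ It h lam t :=
    (It h lam t).mul_mem_left _ hD
  have m2 : (ww - uu * vv) * ι ℝ (H : g) ∈ It h lam t := It_mul_H h lam hlam t H hD
  have m3 : (ι ℝ (H : g) * uu - uu * ι ℝ (H : g)) * vv ∈ It h lam t :=
    It_mul_inv h lam t (fun H' => hv t H') (hu t H)
  have m4 : uu * (ι ℝ (H : g) * vv - vv * ι ℝ (H : g)) ∈ It h lam t :=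
    (It h lam t).mul_mem_left _ (hv t H)
  have key : ι ℝ (H : g) * ww - ww * ι ℝ (H : g)
      = (ι ℝ (H : g) * (ww - uu * vv) - (ww - uu * vv) * ι ℝ (H : g))
        + ((ι ℝ (H : g) * uu - uu * ι ℝ (H : g)) * vv
            + uu * (ι ℝ (H : g) * vv - vv * ι ℝ (H : g))) := by
    noncomm_ring
  rw [key]
  exact Submodule.add_mem _ (Submodule.sub_mem _ m1 m2) (Submodule.add_mem _ m3 m4)

end
end

section
/- Specialization of invariant elements of the central extension yields polynomial invariant families (one direction of the paper's Corollary 6.6): let U ∈ U(g_T) be such that ι_T((H,λ(H)))·U − U·ι_T((H,λ(H))) ∈ I^T for every H ∈ h. Then (i) there exist finitely many a₀,…,a_n ∈ U(g) such that e_t(U) = Σ_{k=0}^n t^k a_k for every t ∈ K (the family t ↦ e_t(U) is polynomial in t), and (ii) for every t ∈ K and every H ∈ h, ι(H)·e_t(U) − e_t(U)·ι(H) ∈ I_t. -/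
/-!
Statement 2 (one direction of the paper's Corollary 6.6): specialization of invariant
elements of the central extension yields polynomial invariant families.
-/

noncomputable section

open UniversalEnvelopingAlgebra

attribute [local instance 100] LieRing.ofAssociativeRing

/-- The Lie ring structure on the direct product `g × ℝ` of `g` with the 1-dimensional
abelian Lie algebra `ℝ`. -/
instance prodLieRing (g : Type*) [LieRing g] : LieRing (g × ℝ) where
  bracket x y := (⁅x.1, y.1⁆, 0)
  add_lie x y z := by
    show (⁅x.1 + y.1, z.1⁆, (0 : ℝ)) = (⁅x.1, z.1⁆, (0 : ℝ)) + (⁅y.1, z.1⁆, (0 : ℝ))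
    rw [add_lie, Prod.mk_add_mk, add_zero]
  lie_add x y z := by
    show (⁅x.1, y.1 + z.1⁆, (0 : ℝ)) = (⁅x.1, y.1⁆, (0 : ℝ)) + (⁅x.1, z.1⁆, (0 : ℝ))
    rw [lie_add, Prod.mk_add_mk, add_zero]
  lie_self x := by
    show (⁅x.1, x.1⁆, (0 : ℝ)) = (0, 0)
    rw [lie_self]
  leibniz_lie x y z := by
    show (⁅x.1, ⁅y.1, z.1⁆⁆, (0 : ℝ))
        = (⁅⁅x.1, y.1⁆, z.1⁆, (0 : ℝ)) + (⁅y.1, ⁅x.1, z.1⁆⁆, (0 : ℝ))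
    rw [Prod.mk_add_mk, add_zero, leibniz_lie]

instance prodLieAlgebra (g : Type*) [LieRing g] [LieAlgebra ℝ g] :
    LieAlgebra ℝ (g × ℝ) where
  lie_smul c x y := by
    show (⁅x.1, (c • y).1⁆, (0 : ℝ)) = c • (⁅x.1, y.1⁆, (0 : ℝ))
    rw [Prod.smul_fst, lie_smul, Prod.smul_mk, smul_zero]

/-- The Lie algebra map `g_T → U(g)`, `(X, c) ↦ ι(X) + t·c·1`, where `U(g)` is regarded as
a Lie algebra via the commutator bracket. -/
def phiT {g : Type*} [LieRing g] [LieAlgebra ℝ g] (t : ℝ) :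
    (g × ℝ) →ₗ⁅ℝ⁆ UniversalEnvelopingAlgebra ℝ g where
  toFun x := ι ℝ x.1 + (t * x.2) • 1
  map_add' x y := by
    simp only [Prod.fst_add, Prod.snd_add, map_add, mul_add, add_smul]
    abel
  map_smul' c x := by
    simp only [Prod.smul_fst, Prod.smul_snd, map_smul, RingHom.id_apply, smul_eq_mul,
      smul_add, smul_smul]
    module
  map_lie' {x y} := by
    have hxy : ⁅x, y⁆ = (⁅x.1, y.1⁆, (0 : ℝ)) := rfl
    rw [hxy]
    show ι ℝ ⁅x.1, y.1⁆ + (t * 0) • 1 = _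
    rw [LieHom.map_lie, LieRing.of_associative_ring_bracket, mul_zero, zero_smul, add_zero,
      LieRing.of_associative_ring_bracket]
    simp only [mul_add, add_mul, smul_mul_assoc, mul_smul_comm, mul_one, one_mul, smul_add,
      smul_smul]
    module

/-- The evaluation algebra homomorphism `e_t : U(g_T) → U(g)`. -/
def eT {g : Type*} [LieRing g] [LieAlgebra ℝ g] (t : ℝ) :
    UniversalEnvelopingAlgebra ℝ (g × ℝ) →ₐ[ℝ] UniversalEnvelopingAlgebra ℝ g :=
  UniversalEnvelopingAlgebra.lift ℝ (phiT t)

/-- The left ideal `I^T = U(g_T)·h^T_λ` generated by the `ι_T((H, λ(H)))`, `H ∈ h`. -/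
def IT {g : Type*} [LieRing g] [LieAlgebra ℝ g] (h : LieSubalgebra ℝ g)
    (lam : h →ₗ[ℝ] ℝ) : Ideal (UniversalEnvelopingAlgebra ℝ (g × ℝ)) :=
  Ideal.span {x | ∃ H : h, x = ι ℝ (((H : g), lam H) : g × ℝ)}

open Polynomial in
/-- The Lie algebra map `g_T → U(g)[X]`, `(X, c) ↦ C(ι X) + c • X`. -/
def psiT (g : Type*) [LieRing g] [LieAlgebra ℝ g] :
    (g × ℝ) →ₗ⁅ℝ⁆ Polynomial (UniversalEnvelopingAlgebra ℝ g) where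
  toFun x := Polynomial.C (ι ℝ x.1) + x.2 • Polynomial.X
  map_add' x y := by
    simp only [Prod.fst_add, Prod.snd_add, map_add, map_add, add_smul]
    abel
  map_smul' c x := by
    simp only [Prod.smul_fst, Prod.smul_snd, map_smul, RingHom.id_apply, smul_eq_mul,
      ← Polynomial.smul_C, smul_add, mul_smul]
  map_lie' {x y} := by
    have hxy : ⁅x, y⁆ = (⁅x.1, y.1⁆, (0 : ℝ)) := rfl
    rw [hxy]
    show C (ι ℝ ⁅x.1, y.1⁆) + (0:ℝ) • X = _
    rw [LieHom.map_lie, LieRing.of_associative_ring_bracket, zero_smul, add_zero,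
      LieRing.of_associative_ring_bracket, map_sub, map_mul, map_mul]
    simp only [mul_add, add_mul, smul_mul_assoc, mul_smul_comm, Polynomial.X_mul_C,
      smul_add, smul_smul]
    module

/-- Lift of `psiT` to `U(g_T)`. -/
def PsiT (g : Type*) [LieRing g] [LieAlgebra ℝ g] :
    UniversalEnvelopingAlgebra ℝ (g × ℝ) →ₐ[ℝ] Polynomial (UniversalEnvelopingAlgebra ℝ g) :=
  UniversalEnvelopingAlgebra.lift ℝ (psiT g)

/-- Evaluation at `t • 1`. -/
def evalT {g : Type*} [LieRing g] [LieAlgebra ℝ g] (t : ℝ) :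
    Polynomial (UniversalEnvelopingAlgebra ℝ g) →ₐ[ℝ] UniversalEnvelopingAlgebra ℝ g :=
  Polynomial.eval₂AlgHom (AlgHom.id ℝ _) (t • 1)
    (fun a => ((Commute.one_right a).smul_right t))

lemma eT_eq {g : Type*} [LieRing g] [LieAlgebra ℝ g] (t : ℝ)
    (u : UniversalEnvelopingAlgebra ℝ (g × ℝ)) :
    eT t u = evalT t (PsiT g u) := by
  have : eT (g := g) t = (evalT t).comp (PsiT g) := by
    apply UniversalEnvelopingAlgebra.hom_ext
    ext x
    show eT t (ι ℝ x) = evalT t (PsiT g (ι ℝ x))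
    rw [eT, UniversalEnvelopingAlgebra.lift_ι_apply, PsiT,
      UniversalEnvelopingAlgebra.lift_ι_apply]
    show ι ℝ x.1 + (t * x.2) • 1 = evalT t (Polynomial.C (ι ℝ x.1) + x.2 • Polynomial.X)
    simp only [map_add, map_smul, evalT, Polynomial.eval₂AlgHom_apply, Polynomial.eval₂_C,
      Polynomial.eval₂_X, AlgHom.coe_id, id_eq, smul_smul]
    rw [mul_comm]
    erw [Polynomial.eval₂AlgHom_apply, Polynomial.eval₂AlgHom_apply, Polynomial.eval₂_C,
      Polynomial.eval₂_X, smul_smul]; rfl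
  rw [this]; rfl

lemma eT_ι {g : Type*} [LieRing g] [LieAlgebra ℝ g] (t : ℝ) (x : g × ℝ) :
    eT t (ι ℝ x) = ι ℝ x.1 + (t * x.2) • 1 := by
  rw [eT, UniversalEnvelopingAlgebra.lift_ι_apply]; rfl

lemma eT_mem_It {g : Type*} [LieRing g] [LieAlgebra ℝ g] (h : LieSubalgebra ℝ g)
    (lam : h →ₗ[ℝ] ℝ) (t : ℝ) {u : UniversalEnvelopingAlgebra ℝ (g × ℝ)}
    (hu : u ∈ IT h lam) : eT t u ∈ It h lam t := by
  induction hu using Submodule.span_induction with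
  | mem x hx =>
    obtain ⟨H, rfl⟩ := hx
    exact Ideal.subset_span ⟨H, by rw [eT_ι]⟩
  | zero => simp
  | add x y _ _ hx hy => rw [map_add]; exact add_mem hx hy
  | smul r x _ hx =>
    rw [smul_eq_mul, map_mul]
    exact Ideal.mul_mem_left _ _ hx

theorem stmt2 (g : Type*) [LieRing g] [LieAlgebra ℝ g] [FiniteDimensional ℝ g]
    (h : LieSubalgebra ℝ g) (lam : h →ₗ[ℝ] ℝ)
    (hlam : ∀ H₁ H₂ : h, lam ⁅H₁, H₂⁆ = 0)
    (U : UniversalEnvelopingAlgebra ℝ (g × ℝ))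
    (hU : ∀ H : h,
      ι ℝ (((H : g), lam H) : g × ℝ) * U - U * ι ℝ (((H : g), lam H) : g × ℝ)
        ∈ IT h lam) :
    (∃ (n : ℕ) (a : ℕ → UniversalEnvelopingAlgebra ℝ g),
      ∀ t : ℝ, eT t U = ∑ k ∈ Finset.range (n + 1), t ^ k • a k) ∧
    ∀ (t : ℝ) (H : h),
      ι ℝ (H : g) * eT t U - eT t U * ι ℝ (H : g) ∈ It h lam t := by
  constructor
  · refine ⟨(PsiT g U).natDegree, fun k => (PsiT g U).coeff k, fun t => ?_⟩
    rw [eT_eq]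
    show Polynomial.eval₂ _ (t • 1) (PsiT g U) = _
    rw [Polynomial.eval₂_eq_sum_range]
    refine Finset.sum_congr rfl fun i _ => ?_
    simp [smul_pow, mul_smul_comm]
  · intro t H
    have key := eT_mem_It h lam t (hU H)
    rw [map_sub, map_mul, map_mul, eT_ι] at key
    have heq : (ι ℝ (H : g) + (t * lam H) • 1) * eT t U
        - eT t U * (ι ℝ (H : g) + (t * lam H) • 1)
        = ι ℝ (H : g) * eT t U - eT t U * ι ℝ (H : g) := by
      simp only [add_mul, mul_add, smul_mul_assoc, mul_smul_comm, one_mul, mul_one]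
      abel
    rwa [heq] at key


end
end

section
/- Abstract form of the paper's Lemma 3.5: suppose F' = Σ_{k=0}^n ε^k·F'_k ∈ V[ε] (with F'_k ∈ V) satisfies d_ε(F') = 0. Then (a) d(Σ_{k=0}^n F'_k) = 0, and (b) if Σ_{k=0}^n F'_k = 0 then F' ∈ (ε−1)·(ker d_ε). Consequently the induced K-linear map J̄ : ker d_ε / (ε−1)·ker d_ε → ker d, sending the class of Σ_k ε^k F'_k to Σ_k F'_k, is well defined and injective. -/
/-!
Statement 5 (abstract form of the paper's Lemma 3.5): if `F' = Σ_k ε^k F'_k` satisfies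
`d_ε(F') = 0`, then (a) `d(Σ_k F'_k) = 0`, and (b) if `Σ_k F'_k = 0` then
`F' ∈ (ε-1)·ker d_ε`; i.e. the induced map `J̄ : ker d_ε/(ε-1)ker d_ε → ker d`,
`[Σ_k ε^k F'_k] ↦ Σ_k F'_k`, is well defined and injective.
-/

open Polynomial

/-- Multiplication by `X - 1` is injective on `PolynomialModule`. -/
private lemma xsub1_smul_eq_zero {K W : Type*} [Field K] [AddCommGroup W] [Module K W]
    {H : PolynomialModule K W} (h : ((X : Polynomial K) - 1) • H = 0) : H = 0 := by
  have hX : ∀ m : ℕ, (((X : Polynomial K)) • H).coeff m = if 1 ≤ m then H.coeff (m - 1) else 0 := by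
    intro m
    rw [← Polynomial.monomial_one_one_eq_X, PolynomialModule.monomial_smul_apply]
    simp
  have h' : ∀ m : ℕ, ((X : Polynomial K) • H).coeff m - H.coeff m = 0 := by
    intro m
    have := congrArg (fun x => PolynomialModule.coeff x m) h
    rw [sub_smul, one_smul] at this
    exact (this : ((X : Polynomial K) • H).coeff m - H.coeff m = 0)
  have hc : ∀ m, H.coeff m = 0 := by
    intro m
    induction m with
    | zero =>
      have := h' 0
      rw [hX 0] at this
      simpa using this
    | succ k ih =>
      have := h' (k + 1)
      rw [hX (k + 1)] at this
      simp only [Nat.le_add_left, if_pos, Nat.add_sub_cancel, ih] at this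
      simpa using this
  exact PolynomialModule.ext (Finsupp.ext hc)

private lemma pm_single_neg {K V : Type*} [Field K] [AddCommGroup V] [Module K V]
    (n : ℕ) (m : V) :
    -PolynomialModule.single K n m = PolynomialModule.single K n (-m) :=
  ((PolynomialModule.lsingle K n).map_neg m).symm

private lemma pm_single_sub {K V : Type*} [Field K] [AddCommGroup V] [Module K V]
    (n : ℕ) (m m' : V) :
    PolynomialModule.single K n m - PolynomialModule.single K n m'
      = PolynomialModule.single K n (m - m') :=
  ((PolynomialModule.lsingle K n).map_sub m m').symm

theorem stmt5 (K V W : Type*) [Field K]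
    [AddCommGroup V] [Module K V] [AddCommGroup W] [Module K W]
    (d : ℕ → V →ₗ[K] W) (hd0 : d 0 = 0)
    -- the family is pointwise finite, so that `d = Σ_i d_i` makes sense
    (hfin : ∀ v : V, (Function.support fun i => d i v).Finite)
    -- the `K[ε]`-linear differential `d_ε = Σ_i ε^i d_i` on `V[ε]`
    (dE : PolynomialModule K V →ₗ[Polynomial K] PolynomialModule K W)
    (hdE : ∀ (k : ℕ) (v : V),
      dE (PolynomialModule.single K k v)
        = ∑ᶠ i, PolynomialModule.single K (i + k) (d i v))
    (n : ℕ) (F' : ℕ → V)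
    (hF' : dE (∑ k ∈ Finset.range (n + 1),
      PolynomialModule.single K k (F' k)) = 0) :
    -- (a) `d(Σ_k F'_k) = 0`
    (∑ᶠ i, d i (∑ k ∈ Finset.range (n + 1), F' k)) = 0 ∧
    -- (b) if `Σ_k F'_k = 0` then `F' ∈ (ε-1)·ker d_ε`
    ((∑ k ∈ Finset.range (n + 1), F' k) = 0 →
      ∃ G : PolynomialModule K V, dE G = 0 ∧
        (∑ k ∈ Finset.range (n + 1), PolynomialModule.single K k (F' k))
          = ((X : Polynomial K) - 1) • G) := by
  classical
  -- evaluate `dE` at `ε = 1` on single terms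
  have key : ∀ (k : ℕ) (v : V),
      PolynomialModule.eval (1 : K) (dE (PolynomialModule.single K k v)) = ∑ᶠ i, d i v := by
    intro k v
    have hsupp : (Function.support fun i =>
        PolynomialModule.single K (i + k) (d i v)).Finite := by
      refine (hfin v).subset ?_
      intro i hi
      simp only [Function.mem_support] at hi ⊢
      intro h0
      exact hi (by rw [h0, PolynomialModule.single_zero])
    have h2 : PolynomialModule.eval (1 : K)
        (∑ᶠ i, PolynomialModule.single K (i + k) (d i v))
        = ∑ᶠ i, PolynomialModule.eval (1 : K)
            (PolynomialModule.single K (i + k) (d i v)) :=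
      (PolynomialModule.eval (1 : K)).toAddMonoidHom.map_finsum hsupp
    rw [hdE k v, h2]
    refine finsum_congr fun i => ?_
    simp [PolynomialModule.eval_single]
  have ha0 : ∑ k ∈ Finset.range (n + 1), ∑ᶠ i, d i (F' k) = 0 := by
    have h2 : PolynomialModule.eval (1 : K)
        (dE (∑ k ∈ Finset.range (n + 1), PolynomialModule.single K k (F' k))) = 0 := by
      rw [hF', map_zero]
    rw [map_sum dE _ _, map_sum (PolynomialModule.eval (1 : K)) _ _] at h2
    rw [← h2]
    exact Finset.sum_congr rfl fun k _ => (key k (F' k)).symm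
  constructor
  · have h1 : (∑ᶠ i, d i (∑ k ∈ Finset.range (n + 1), F' k))
        = ∑ᶠ i, ∑ k ∈ Finset.range (n + 1), d i (F' k) :=
      finsum_congr fun i => map_sum (d i) _ _
    rw [h1, finsum_sum_comm _ _ fun k _ => hfin (F' k)]
    exact ha0
  · intro hsum
    set g : ℕ → V := fun k => -∑ j ∈ Finset.range (k + 1), F' j with hg
    have hgn : g n = 0 := by simp [hg, hsum]
    set G : PolynomialModule K V :=
      ∑ k ∈ Finset.range (n + 1), PolynomialModule.single K k (g k) with hG
    have hPG : (∑ k ∈ Finset.range (n + 1), PolynomialModule.single K k (F' k))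
        = ((X : Polynomial K) - 1) • G := by
      rw [sub_smul, one_smul]
      have hX : (X : Polynomial K) • G
          = ∑ k ∈ Finset.range (n + 1), PolynomialModule.single K (k + 1) (g k) := by
        rw [hG, Finset.smul_sum]
        refine Finset.sum_congr rfl fun k _ => ?_
        rw [← Polynomial.monomial_one_one_eq_X, PolynomialModule.monomial_smul_single,
          one_smul, Nat.add_comm]
      rw [hX]
      have e3 : ∑ k ∈ Finset.range (n + 1), PolynomialModule.single K (k + 1) (g k)
          = ∑ k ∈ Finset.range n, PolynomialModule.single K (k + 1) (g k) := by
        rw [Finset.sum_range_succ, hgn, PolynomialModule.single_zero, add_zero]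
      rw [e3, hG, Finset.sum_range_succ' (fun k => PolynomialModule.single K k (g k)) n,
        Finset.sum_range_succ' (fun k => PolynomialModule.single K k (F' k)) n]
      have h0 : PolynomialModule.single K 0 (F' 0)
          = - PolynomialModule.single K 0 (g 0) := by
        rw [← pm_single_neg]
        simp [hg, Finset.sum_range_one]
      have hsucc : ∀ k, PolynomialModule.single K (k + 1) (F' (k + 1))
          = PolynomialModule.single K (k + 1) (g k) -
            PolynomialModule.single K (k + 1) (g (k + 1)) := by
        intro k
        rw [pm_single_sub]
        congr 1
        simp only [hg]
        rw [Finset.sum_range_succ (f := F') (n := k + 1)]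
        abel
      rw [Finset.sum_congr rfl fun k _ => hsucc k, Finset.sum_sub_distrib, h0]
      abel
    refine ⟨G, ?_, hPG⟩
    have hz : ((X : Polynomial K) - 1) • dE G = 0 := by
      rw [← map_smul, ← hPG, hF']
    exact xsub1_smul_eq_zero hz
end

section
/- Abstract form of part 1 of the paper's Theorem 6.2 (the proof uses only the degree decomposition of the operators): let F₀,…,F_m ∈ V with homogeneous components F_p^(i) ∈ V_i, and suppose that D_t(Σ_{p=0}^m t^p F_p) = 0 for every t ∈ K \ {0}. Then for any integer N ≥ max{i+p : F_p^(i) ≠ 0}, the element F_ε := Σ_{i,p} ε^{N−i−p}·F_p^(i) of V[ε] satisfies D_ε(F_ε) = 0. -/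
set_option maxHeartbeats 1000000
set_option synthInstance.maxHeartbeats 400000

open Polynomial

lemma aux_indep {W : Type*} [AddCommGroup W] [Module ℝ W] {Wg : ℕ → Submodule ℝ W}
    (hWg : DirectSum.IsInternal Wg) (s : Finset ℕ) (w : ℕ → W) (hw : ∀ j, w j ∈ Wg j)
    (h0 : ∑ j ∈ s, w j = 0) : ∀ j ∈ s, w j = 0 := by
  intro j hj
  set x : DirectSum ℕ (fun j => Wg j) :=
    ∑ j' ∈ s, DirectSum.of (fun j => Wg j) j' ⟨w j', hw j'⟩ with hx
  have hcoe : DirectSum.coeAddMonoidHom Wg x = 0 := by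
    rw [hx, map_sum (DirectSum.coeAddMonoidHom Wg) (fun j' => DirectSum.of (fun j => Wg j) j' ⟨w j', hw j'⟩) s]
    simpa [DirectSum.coeAddMonoidHom_of] using h0
  have hx0 : x = 0 := hWg.injective (hcoe.trans (map_zero (DirectSum.coeAddMonoidHom Wg)).symm)
  have h3 : x j = 0 := by rw [hx0]; simp
  rw [hx, DFinsupp.finset_sum_apply, Finset.sum_eq_single j
    (fun b _ hb => by simp [DirectSum.of_apply, hb])
    (fun h => absurd hj h)] at h3
  simp only [DirectSum.of_apply, dif_pos rfl] at h3
  exact congrArg Subtype.val h3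

lemma aux_coeffs {W : Type*} [AddCommGroup W] [Module ℝ W] (s : Finset ℕ) (u v : ℕ → W)
    (h : ∀ t : ℝ, t ≠ 0 → ∑ p ∈ s, (t ^ (p + 1) • u p + t ^ p • v p) = 0) :
    ∀ a : ℕ, (∑ p ∈ s, if p + 1 = a then u p else 0)
      + (∑ p ∈ s, if p = a then v p else 0) = 0 := by
  intro a
  rw [← Module.forall_dual_apply_eq_zero_iff ℝ]
  intro φ
  set q : ℝ[X] := ∑ p ∈ s, (monomial (p + 1) (φ (u p)) + monomial p (φ (v p))) with hq
  have hqe : ∀ t : ℝ, t ≠ 0 → q.eval t = 0 := by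
    intro t ht
    have := congrArg φ (h t ht)
    simp only [map_sum, map_add, map_smul, map_zero, smul_eq_mul] at this
    rw [hq]
    simpa [eval_finset_sum, eval_monomial, mul_comm] using this
  have hq0 : q = 0 := by
    apply q.eq_zero_of_infinite_isRoot
    apply Set.Infinite.mono (s := {(0:ℝ)}ᶜ)
    · intro t ht; exact hqe t ht
    · exact (Set.finite_singleton 0).infinite_compl
  have := congrArg (fun r => Polynomial.coeff r a) hq0
  simp only [hq, finset_sum_coeff, coeff_add, coeff_monomial, coeff_zero] at this
  rw [map_add, map_sum, map_sum]
  rw [← this]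
  rw [← Finset.sum_add_distrib]
  exact Finset.sum_congr rfl fun p _ => by
    rw [apply_ite φ, apply_ite φ, map_zero]

lemma aux_collapse2 {W : Type*} [AddCommGroup W] (n : ℕ) (c : ℕ → Prop) [DecidablePred c]
    (x : ℕ) (hx : x < n) (A : W) :
    ∑ j ∈ Finset.range n, (if c j ∧ x = j then A else 0) = if c x then A else 0 := by
  have h : ∀ j, (if c j ∧ x = j then A else (0 : W)) = if x = j then (if c j then A else 0) else 0 := by
    intro j; by_cases h1 : c j <;> by_cases h2 : x = j <;> simp [h1, h2]
  simp_rw [h]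
  rw [Finset.sum_ite_eq]
  simp [hx]

lemma aux_pm_sum_apply {W : Type*} [AddCommGroup W] [Module ℝ W] {α : Type*} (s : Finset α)
    (f : α → PolynomialModule ℝ W) (e : ℕ) : (∑ x ∈ s, f x).coeff e = ∑ x ∈ s, (f x).coeff e := by
  classical
  induction s using Finset.cons_induction with
  | empty => simp
  | cons a s ha ih =>
    rw [Finset.sum_cons, Finset.sum_cons, PolynomialModule.coeff_add, Finsupp.add_apply, ih]
open Polynomial

theorem stmt6 (V W : Type*)
    [AddCommGroup V] [Module ℝ V] [AddCommGroup W] [Module ℝ W]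
    (Vg : ℕ → Submodule ℝ V) (Wg : ℕ → Submodule ℝ W)
    (hVg : DirectSum.IsInternal Vg) (hWg : DirectSum.IsInternal Wg)
    (d' d'' : ℕ → V →ₗ[ℝ] W) (hd'0 : d' 0 = 0) (hd''0 : d'' 0 = 0)
    -- `d'_k` is homogeneous of degree `-k`
    (hd' : ∀ k, 1 ≤ k → ∀ i, ∀ x ∈ Vg i,
      (k ≤ i → d' k x ∈ Wg (i - k)) ∧ (i < k → d' k x = 0))
    -- `d''_k` is homogeneous of degree `1 - k`
    (hd'' : ∀ k, 1 ≤ k → ∀ i, ∀ x ∈ Vg i,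
      (k ≤ i + 1 → d'' k x ∈ Wg (i + 1 - k)) ∧ (i + 1 < k → d'' k x = 0))
    -- the `ℝ[ε]`-linear operator `D_ε = Σ_k ε^k·(d'_k + d''_k)`
    (DE : PolynomialModule ℝ V →ₗ[Polynomial ℝ] PolynomialModule ℝ W)
    (hDE : ∀ (k : ℕ) (v : V),
      DE (PolynomialModule.single ℝ k v)
        = ∑ᶠ j, PolynomialModule.single ℝ (j + k) (d' j v + d'' j v))
    -- the elements `F_p = Σ_i F_p^(i)` with homogeneous components `F_p^(i) ∈ V_i`
    (m : ℕ) (Fc : ℕ → ℕ → V)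
    (hFc : ∀ p i, Fc p i ∈ Vg i)
    (hFfin : ∀ p, (Function.support (Fc p)).Finite)
    -- hypothesis: `D_t(Σ_p t^p F_p) = 0` for every `t ≠ 0`
    (ht : ∀ t : ℝ, t ≠ 0 →
      (∑ᶠ k, (t • d' k (∑ p ∈ Finset.range (m + 1), t ^ p • ∑ᶠ i, Fc p i)
          + d'' k (∑ p ∈ Finset.range (m + 1), t ^ p • ∑ᶠ i, Fc p i))) = 0) :
    ∀ N : ℕ, (∀ p i, Fc p i ≠ 0 → i + p ≤ N) →
      DE (∑ p ∈ Finset.range (m + 1), ∑ i ∈ Finset.range (N + 1),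
        PolynomialModule.single ℝ (N - i - p) (Fc p i)) = 0 := by
  classical
  intro N hN
  -- basic vanishing / membership facts
  have hA0 : ∀ k p i, i < k → d' k (Fc p i) = 0 := by
    intro k p i h
    exact (hd' k (by omega) i _ (hFc p i)).2 h
  have hB0 : ∀ k p i, i + 1 < k → d'' k (Fc p i) = 0 := by
    intro k p i h
    exact (hd'' k (by omega) i _ (hFc p i)).2 h
  have hAmem : ∀ k p i, d' k (Fc p i) ∈ Wg (i - k) := by
    intro k p i
    rcases lt_or_ge i k with h | h
    · rw [hA0 k p i h]; exact zero_mem _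
    · rcases Nat.eq_zero_or_pos k with rfl | hk
      · simp only [hd'0, LinearMap.zero_apply]; exact zero_mem _
      · exact (hd' k hk i _ (hFc p i)).1 h
  have hBmem : ∀ k p i, d'' k (Fc p i) ∈ Wg (i + 1 - k) := by
    intro k p i
    rcases lt_or_ge (i + 1) k with h | h
    · rw [hB0 k p i h]; exact zero_mem _
    · rcases Nat.eq_zero_or_pos k with rfl | hk
      · simp only [hd''0, LinearMap.zero_apply]; exact zero_mem _
      · exact (hd'' k hk i _ (hFc p i)).1 h
  -- the finsum over `i` is a finite sum
  have hsupF : ∀ p, ∑ᶠ i, Fc p i = ∑ i ∈ Finset.range (N + 1), Fc p i := by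
    intro p
    apply finsum_eq_sum_of_support_subset
    intro i hi
    simp only [Function.mem_support] at hi
    simp only [Finset.coe_range, Set.mem_Iio]
    have := hN p i hi; omega
  -- hypothesis as a finite polynomial identity
  have key_t : ∀ t : ℝ, t ≠ 0 → ∑ p ∈ Finset.range (m + 1),
      (t ^ (p + 1) • (∑ i ∈ Finset.range (N + 1), ∑ k ∈ Finset.range (N + 2), d' k (Fc p i))
        + t ^ p • (∑ i ∈ Finset.range (N + 1), ∑ k ∈ Finset.range (N + 2), d'' k (Fc p i))) = 0 := by
    intro t ht0
    have H := ht t ht0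
    simp only [hsupF] at H
    have hsupK : Function.support (fun k =>
        t • d' k (∑ p ∈ Finset.range (m + 1), t ^ p • ∑ i ∈ Finset.range (N + 1), Fc p i)
          + d'' k (∑ p ∈ Finset.range (m + 1), t ^ p • ∑ i ∈ Finset.range (N + 1), Fc p i))
        ⊆ ↑(Finset.range (N + 2)) := by
      intro k hk
      simp only [Function.mem_support] at hk
      simp only [Finset.coe_range, Set.mem_Iio]
      by_contra hk2
      push_neg at hk2
      apply hk
      have e1 : d' k (∑ p ∈ Finset.range (m + 1),
          t ^ p • ∑ i ∈ Finset.range (N + 1), Fc p i) = 0 := by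
        rw [map_sum]
        refine Finset.sum_eq_zero fun p _ => ?_
        rw [LinearMap.map_smul, map_sum, Finset.sum_eq_zero fun i hi =>
          hA0 k p i (by simp only [Finset.mem_range] at hi; omega), smul_zero]
      have e2 : d'' k (∑ p ∈ Finset.range (m + 1),
          t ^ p • ∑ i ∈ Finset.range (N + 1), Fc p i) = 0 := by
        rw [map_sum]
        refine Finset.sum_eq_zero fun p _ => ?_
        rw [LinearMap.map_smul, map_sum, Finset.sum_eq_zero fun i hi =>
          hB0 k p i (by simp only [Finset.mem_range] at hi; omega), smul_zero]
      rw [e1, e2, smul_zero, add_zero]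
    rw [finsum_eq_sum_of_support_subset _ hsupK] at H
    refine Eq.trans ?_ H
    calc ∑ p ∈ Finset.range (m + 1),
          (t ^ (p + 1) • (∑ i ∈ Finset.range (N + 1), ∑ k ∈ Finset.range (N + 2), d' k (Fc p i))
            + t ^ p • (∑ i ∈ Finset.range (N + 1), ∑ k ∈ Finset.range (N + 2), d'' k (Fc p i)))
        = ∑ p ∈ Finset.range (m + 1), ∑ k ∈ Finset.range (N + 2),
          (t ^ (p + 1) • (∑ i ∈ Finset.range (N + 1), d' k (Fc p i))
            + t ^ p • (∑ i ∈ Finset.range (N + 1), d'' k (Fc p i))) := by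
          refine Finset.sum_congr rfl fun p _ => ?_
          rw [show (∑ i ∈ Finset.range (N + 1), ∑ k ∈ Finset.range (N + 2), d' k (Fc p i))
              = ∑ k ∈ Finset.range (N + 2), ∑ i ∈ Finset.range (N + 1), d' k (Fc p i) from
              Finset.sum_comm,
            show (∑ i ∈ Finset.range (N + 1), ∑ k ∈ Finset.range (N + 2), d'' k (Fc p i))
              = ∑ k ∈ Finset.range (N + 2), ∑ i ∈ Finset.range (N + 1), d'' k (Fc p i) from
              Finset.sum_comm,
            Finset.smul_sum, Finset.smul_sum, ← Finset.sum_add_distrib]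
      _ = ∑ k ∈ Finset.range (N + 2), ∑ p ∈ Finset.range (m + 1),
          (t ^ (p + 1) • (∑ i ∈ Finset.range (N + 1), d' k (Fc p i))
            + t ^ p • (∑ i ∈ Finset.range (N + 1), d'' k (Fc p i))) := Finset.sum_comm
      _ = ∑ k ∈ Finset.range (N + 2),
          (t • d' k (∑ p ∈ Finset.range (m + 1), t ^ p • ∑ i ∈ Finset.range (N + 1), Fc p i)
            + d'' k (∑ p ∈ Finset.range (m + 1), t ^ p • ∑ i ∈ Finset.range (N + 1), Fc p i)) := by
          refine Finset.sum_congr rfl fun k _ => ?_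
          simp only [map_sum, LinearMap.map_smul]
          rw [Finset.smul_sum, ← Finset.sum_add_distrib]
          refine Finset.sum_congr rfl fun p _ => ?_
          rw [smul_smul, ← pow_succ']
  have L1 := aux_coeffs (Finset.range (m + 1))
    (fun p => ∑ i ∈ Finset.range (N + 1), ∑ k ∈ Finset.range (N + 2), d' k (Fc p i))
    (fun p => ∑ i ∈ Finset.range (N + 1), ∑ k ∈ Finset.range (N + 2), d'' k (Fc p i)) key_t
  -- if-sum form of L1
  have L1' : ∀ a : ℕ, ∑ p ∈ Finset.range (m + 1), ∑ i ∈ Finset.range (N + 1),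
      ∑ k ∈ Finset.range (N + 2),
      ((if p + 1 = a then d' k (Fc p i) else 0) + (if p = a then d'' k (Fc p i) else 0)) = 0 := by
    intro a
    have h := L1 a
    rw [← Finset.sum_add_distrib] at h
    refine Eq.trans ?_ h
    refine Finset.sum_congr rfl fun p _ => ?_
    split_ifs <;> simp [Finset.sum_add_distrib]
  -- graded refinement
  have L2 : ∀ a j : ℕ, ∑ p ∈ Finset.range (m + 1), ∑ i ∈ Finset.range (N + 1),
      ∑ k ∈ Finset.range (N + 2),
      ((if p + 1 = a ∧ i - k = j then d' k (Fc p i) else 0)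
        + (if p = a ∧ i + 1 - k = j then d'' k (Fc p i) else 0)) = 0 := by
    intro a j
    by_cases hj : j ∈ Finset.range (N + 2)
    · refine aux_indep hWg (Finset.range (N + 2))
        (fun j => ∑ p ∈ Finset.range (m + 1), ∑ i ∈ Finset.range (N + 1),
          ∑ k ∈ Finset.range (N + 2),
          ((if p + 1 = a ∧ i - k = j then d' k (Fc p i) else 0)
            + (if p = a ∧ i + 1 - k = j then d'' k (Fc p i) else 0))) ?_ ?_ j hj
      · intro j'
        refine Submodule.sum_mem _ fun p _ => Submodule.sum_mem _ fun i _ =>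
          Submodule.sum_mem _ fun k _ => Submodule.add_mem _ ?_ ?_
        · split_ifs with h
          · exact h.2 ▸ hAmem k p i
          · exact zero_mem _
        · split_ifs with h
          · exact h.2 ▸ hBmem k p i
          · exact zero_mem _
      · refine Eq.trans ?_ (L1' a)
        calc ∑ j' ∈ Finset.range (N + 2), ∑ p ∈ Finset.range (m + 1),
              ∑ i ∈ Finset.range (N + 1), ∑ k ∈ Finset.range (N + 2),
              ((if p + 1 = a ∧ i - k = j' then d' k (Fc p i) else 0)
                + (if p = a ∧ i + 1 - k = j' then d'' k (Fc p i) else 0))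
            = ∑ p ∈ Finset.range (m + 1), ∑ i ∈ Finset.range (N + 1),
              ∑ k ∈ Finset.range (N + 2), ∑ j' ∈ Finset.range (N + 2),
              ((if p + 1 = a ∧ i - k = j' then d' k (Fc p i) else 0)
                + (if p = a ∧ i + 1 - k = j' then d'' k (Fc p i) else 0)) := by
              rw [Finset.sum_comm]
              refine Finset.sum_congr rfl fun p _ => ?_
              rw [Finset.sum_comm]
              exact Finset.sum_congr rfl fun i _ => Finset.sum_comm
          _ = ∑ p ∈ Finset.range (m + 1), ∑ i ∈ Finset.range (N + 1),
              ∑ k ∈ Finset.range (N + 2),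
              ((if p + 1 = a then d' k (Fc p i) else 0)
                + (if p = a then d'' k (Fc p i) else 0)) := by
              refine Finset.sum_congr rfl fun p _ => Finset.sum_congr rfl fun i hi =>
                Finset.sum_congr rfl fun k _ => ?_
              simp only [Finset.mem_range] at hi
              rw [Finset.sum_add_distrib,
                aux_collapse2 (N + 2) (fun _ => p + 1 = a) (i - k) (by omega) _,
                aux_collapse2 (N + 2) (fun _ => p = a) (i + 1 - k) (by omega) _]
    · simp only [Finset.mem_range] at hj
      refine Finset.sum_eq_zero fun p _ => Finset.sum_eq_zero fun i hi =>
        Finset.sum_eq_zero fun k _ => ?_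
      simp only [Finset.mem_range] at hi
      rw [if_neg (fun h => absurd h.2 (by omega)),
        if_neg (fun h => absurd h.2 (by omega)), add_zero]
  -- compute `DE` of the sum
  have hDEsum : DE (∑ p ∈ Finset.range (m + 1), ∑ i ∈ Finset.range (N + 1),
        PolynomialModule.single ℝ (N - i - p) (Fc p i))
      = ∑ p ∈ Finset.range (m + 1), ∑ i ∈ Finset.range (N + 1), ∑ k ∈ Finset.range (N + 2),
        PolynomialModule.single ℝ (k + (N - i - p)) (d' k (Fc p i) + d'' k (Fc p i)) := by
    rw [map_sum]
    refine Finset.sum_congr rfl fun p _ => ?_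
    rw [map_sum]
    refine Finset.sum_congr rfl fun i hi => ?_
    rw [hDE]
    apply finsum_eq_sum_of_support_subset
    intro k hk
    simp only [Function.mem_support] at hk
    simp only [Finset.coe_range, Set.mem_Iio]
    by_contra h2
    push_neg at h2
    apply hk
    simp only [Finset.mem_range] at hi
    rw [hA0 k p i (by omega), hB0 k p i (by omega), add_zero]
    exact PolynomialModule.single_zero _
  rw [hDEsum]
  refine PolynomialModule.coeff_injective (Finsupp.ext fun e => ?_)
  rw [aux_pm_sum_apply]
  simp_rw [aux_pm_sum_apply, PolynomialModule.coeff_single, Finsupp.single_apply]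
  rw [PolynomialModule.coeff_zero, Finsupp.zero_apply]
  -- coefficient at `e`
  have step1 : ∀ p i k : ℕ, i ≤ N →
      (if k + (N - i - p) = e then d' k (Fc p i) + d'' k (Fc p i) else 0)
      = ∑ j ∈ Finset.range (N + 2),
        ((if p + 1 + e + j = N + 1 ∧ i - k = j then d' k (Fc p i) else 0)
          + (if p + e + j = N + 1 ∧ i + 1 - k = j then d'' k (Fc p i) else 0)) := by
    intro p i k hi
    have hA' : (if k + (N - i - p) = e then d' k (Fc p i) else 0)
        = (if p + 1 + e + (i - k) = N + 1 then d' k (Fc p i) else 0) := by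
      by_cases hA : d' k (Fc p i) = 0
      · simp [hA]
      · have hki : k ≤ i := by
          by_contra h; exact hA (hA0 k p i (by omega))
        have hip : i + p ≤ N := hN p i (fun h => hA (by rw [h, map_zero]))
        simp only [show (k + (N - i - p) = e) ↔ (p + 1 + e + (i - k) = N + 1) from by omega]
    have hB' : (if k + (N - i - p) = e then d'' k (Fc p i) else 0)
        = (if p + e + (i + 1 - k) = N + 1 then d'' k (Fc p i) else 0) := by
      by_cases hB : d'' k (Fc p i) = 0
      · simp [hB]
      · have hki : k ≤ i + 1 := by
          by_contra h; exact hB (hB0 k p i (by omega))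
        have hip : i + p ≤ N := hN p i (fun h => hB (by rw [h, map_zero]))
        simp only [show (k + (N - i - p) = e) ↔ (p + e + (i + 1 - k) = N + 1) from by omega]
    rw [Finset.sum_add_distrib,
      aux_collapse2 (N + 2) (fun j => p + 1 + e + j = N + 1) (i - k) (by omega) _,
      aux_collapse2 (N + 2) (fun j => p + e + j = N + 1) (i + 1 - k) (by omega) _,
      ← hA', ← hB']
    split_ifs <;> simp
  calc ∑ p ∈ Finset.range (m + 1), ∑ i ∈ Finset.range (N + 1), ∑ k ∈ Finset.range (N + 2),
        (if k + (N - i - p) = e then d' k (Fc p i) + d'' k (Fc p i) else 0)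
      = ∑ p ∈ Finset.range (m + 1), ∑ i ∈ Finset.range (N + 1), ∑ k ∈ Finset.range (N + 2),
        ∑ j ∈ Finset.range (N + 2),
        ((if p + 1 + e + j = N + 1 ∧ i - k = j then d' k (Fc p i) else 0)
          + (if p + e + j = N + 1 ∧ i + 1 - k = j then d'' k (Fc p i) else 0)) := by
        refine Finset.sum_congr rfl fun p _ => Finset.sum_congr rfl fun i hi =>
          Finset.sum_congr rfl fun k _ => ?_
        simp only [Finset.mem_range] at hi
        exact step1 p i k (by omega)
    _ = ∑ j ∈ Finset.range (N + 2), ∑ p ∈ Finset.range (m + 1), ∑ i ∈ Finset.range (N + 1),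
        ∑ k ∈ Finset.range (N + 2),
        ((if p + 1 + e + j = N + 1 ∧ i - k = j then d' k (Fc p i) else 0)
          + (if p + e + j = N + 1 ∧ i + 1 - k = j then d'' k (Fc p i) else 0)) := by
        rw [show (∑ p ∈ Finset.range (m + 1), ∑ i ∈ Finset.range (N + 1),
            ∑ k ∈ Finset.range (N + 2), ∑ j ∈ Finset.range (N + 2),
            ((if p + 1 + e + j = N + 1 ∧ i - k = j then d' k (Fc p i) else 0)
              + (if p + e + j = N + 1 ∧ i + 1 - k = j then d'' k (Fc p i) else 0)))
            = ∑ p ∈ Finset.range (m + 1), ∑ i ∈ Finset.range (N + 1),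
            ∑ j ∈ Finset.range (N + 2), ∑ k ∈ Finset.range (N + 2),
            ((if p + 1 + e + j = N + 1 ∧ i - k = j then d' k (Fc p i) else 0)
              + (if p + e + j = N + 1 ∧ i + 1 - k = j then d'' k (Fc p i) else 0)) from
          Finset.sum_congr rfl fun p _ => Finset.sum_congr rfl fun i _ => Finset.sum_comm]
        rw [show (∑ p ∈ Finset.range (m + 1), ∑ i ∈ Finset.range (N + 1),
            ∑ j ∈ Finset.range (N + 2), ∑ k ∈ Finset.range (N + 2),
            ((if p + 1 + e + j = N + 1 ∧ i - k = j then d' k (Fc p i) else 0)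
              + (if p + e + j = N + 1 ∧ i + 1 - k = j then d'' k (Fc p i) else 0)))
            = ∑ p ∈ Finset.range (m + 1), ∑ j ∈ Finset.range (N + 2),
            ∑ i ∈ Finset.range (N + 1), ∑ k ∈ Finset.range (N + 2),
            ((if p + 1 + e + j = N + 1 ∧ i - k = j then d' k (Fc p i) else 0)
              + (if p + e + j = N + 1 ∧ i + 1 - k = j then d'' k (Fc p i) else 0)) from
          Finset.sum_congr rfl fun p _ => Finset.sum_comm]
        exact Finset.sum_comm
    _ = 0 := by
        refine Finset.sum_eq_zero fun j _ => ?_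
        by_cases hej : e + j ≤ N + 1
        · refine Eq.trans ?_ (L2 (N + 1 - e - j) j)
          refine Finset.sum_congr rfl fun p _ => Finset.sum_congr rfl fun i _ =>
            Finset.sum_congr rfl fun k _ => ?_
          simp only [show (p + 1 + e + j = N + 1) ↔ (p + 1 = N + 1 - e - j) from by omega,
            show (p + e + j = N + 1) ↔ (p = N + 1 - e - j) from by omega]
        · refine Finset.sum_eq_zero fun p _ => Finset.sum_eq_zero fun i _ =>
            Finset.sum_eq_zero fun k _ => ?_
          rw [if_neg (fun h => absurd h.1 (by omega)),
            if_neg (fun h => absurd h.1 (by omega)), add_zero]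
end

section
/- Abstract form of part 2 of the paper's Theorem 6.2: let F₀,…,F_n ∈ V with homogeneous components F_k^(i) ∈ V_i, and suppose that D_ε(Σ_{k=0}^n ε^k F_k) = 0 in W[ε]. Then for every t ∈ K \ {0} and any integer N ≥ max{i+k : F_k^(i) ≠ 0}, one has D_t(Σ_{i,k} t^{N−i−k}·F_k^(i)) = 0. -/
/-!
Statement 7 (abstract form of part 2 of the paper's Theorem 6.2): if
`D_ε(Σ_k ε^k F_k) = 0`, then for every `t ≠ 0` and `N ≥ max{i+k : F_k^(i) ≠ 0}` one has
`D_t(Σ_{i,k} t^{N-i-k}·F_k^(i)) = 0`.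
-/

open Polynomial

private lemma pm_sum_apply {W : Type*} [AddCommGroup W] [Module ℝ W] {α : Type*}
    (s : Finset α) (f : α → PolynomialModule ℝ W) (m : ℕ) :
    (∑ a ∈ s, f a).coeff m = ∑ a ∈ s, (f a).coeff m := by
  classical
  induction s using Finset.induction_on with
  | empty => rfl
  | insert _ _ h ih =>
    rw [Finset.sum_insert h, Finset.sum_insert h, PolynomialModule.coeff_add, Finsupp.add_apply, ih]

private lemma pi_exists {W : Type*} [AddCommGroup W] [Module ℝ W]
    (Wg : ℕ → Submodule ℝ W) (hWg : DirectSum.IsInternal Wg) :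
    ∃ π : ℕ → (W →ₗ[ℝ] W), ∀ (p q : ℕ) (v : W), v ∈ Wg q → π p v = if q = p then v else 0 := by
  classical
  refine ⟨fun p => (Wg p).subtype ∘ₗ (DirectSum.component ℝ ℕ (fun q => ↥(Wg q)) p) ∘ₗ
    (LinearEquiv.ofBijective (DirectSum.coeLinearMap Wg) hWg).symm.toLinearMap, ?_⟩
  intro p q v hv
  simp only [LinearMap.coe_comp, Function.comp_apply, LinearEquiv.coe_coe]
  rw [← DirectSum.apply_eq_component]
  by_cases hqp : q = p
  · subst hqp
    rw [hWg.ofBijective_coeLinearMap_of_mem hv, if_pos rfl]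
    rfl
  · rw [hWg.ofBijective_coeLinearMap_of_mem_ne hqp hv, if_neg hqp]
    rfl

theorem stmt7 (V W : Type*)
    [AddCommGroup V] [Module ℝ V] [AddCommGroup W] [Module ℝ W]
    (Vg : ℕ → Submodule ℝ V) (Wg : ℕ → Submodule ℝ W)
    (hVg : DirectSum.IsInternal Vg) (hWg : DirectSum.IsInternal Wg)
    (d' d'' : ℕ → V →ₗ[ℝ] W) (hd'0 : d' 0 = 0) (hd''0 : d'' 0 = 0)
    -- `d'_k` is homogeneous of degree `-k`
    (hd' : ∀ k, 1 ≤ k → ∀ i, ∀ x ∈ Vg i,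
      (k ≤ i → d' k x ∈ Wg (i - k)) ∧ (i < k → d' k x = 0))
    -- `d''_k` is homogeneous of degree `1 - k`
    (hd'' : ∀ k, 1 ≤ k → ∀ i, ∀ x ∈ Vg i,
      (k ≤ i + 1 → d'' k x ∈ Wg (i + 1 - k)) ∧ (i + 1 < k → d'' k x = 0))
    -- the `ℝ[ε]`-linear operator `D_ε = Σ_k ε^k·(d'_k + d''_k)`
    (DE : PolynomialModule ℝ V →ₗ[Polynomial ℝ] PolynomialModule ℝ W)
    (hDE : ∀ (k : ℕ) (v : V),
      DE (PolynomialModule.single ℝ k v)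
        = ∑ᶠ j, PolynomialModule.single ℝ (j + k) (d' j v + d'' j v))
    -- the elements `F_k = Σ_i F_k^(i)` with homogeneous components `F_k^(i) ∈ V_i`
    (n : ℕ) (Fc : ℕ → ℕ → V)
    (hFc : ∀ k i, Fc k i ∈ Vg i)
    (hFfin : ∀ k, (Function.support (Fc k)).Finite)
    -- hypothesis: `D_ε(Σ_k ε^k F_k) = 0` in `W[ε]`
    (hE : DE (∑ k ∈ Finset.range (n + 1),
      PolynomialModule.single ℝ k (∑ᶠ i, Fc k i)) = 0) :
    ∀ t : ℝ, t ≠ 0 → ∀ N : ℕ, (∀ k i, Fc k i ≠ 0 → i + k ≤ N) →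
      (∑ᶠ j,
        (t • d' j (∑ k ∈ Finset.range (n + 1), ∑ i ∈ Finset.range (N + 1),
            t ^ (N - i - k) • Fc k i)
          + d'' j (∑ k ∈ Finset.range (n + 1), ∑ i ∈ Finset.range (N + 1),
            t ^ (N - i - k) • Fc k i))) = 0 := by
  classical
  intro t ht N hN
  set x : V := ∑ k ∈ Finset.range (n + 1), ∑ i ∈ Finset.range (N + 1),
      t ^ (N - i - k) • Fc k i with hxdef
  -- vanishing of components in too-low degree
  have hz' : ∀ j i, i < j → ∀ k, d' j (Fc k i) = 0 := fun j i hij k =>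
    (hd' j (Nat.lt_of_le_of_lt (Nat.zero_le i) hij) i (Fc k i) (hFc k i)).2 hij
  have hz'' : ∀ j i, i + 1 < j → ∀ k, d'' j (Fc k i) = 0 := fun j i hij k =>
    (hd'' j (Nat.lt_of_le_of_lt (Nat.zero_le (i + 1)) hij) i (Fc k i) (hFc k i)).2 hij
  have hmem' : ∀ j k i, d' j (Fc k i) ∈ Wg (i - j) := by
    intro j k i
    rcases Nat.eq_zero_or_pos j with h0 | h1
    · subst h0
      rw [hd'0, LinearMap.zero_apply]
      exact (Wg _).zero_mem
    · by_cases hji : j ≤ i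
      · exact (hd' j h1 i (Fc k i) (hFc k i)).1 hji
      · rw [hz' j i (Nat.not_le.mp hji) k]
        exact (Wg _).zero_mem
  have hmem'' : ∀ j k i, d'' j (Fc k i) ∈ Wg (i + 1 - j) := by
    intro j k i
    rcases Nat.eq_zero_or_pos j with h0 | h1
    · subst h0
      rw [hd''0, LinearMap.zero_apply]
      exact (Wg _).zero_mem
    · by_cases hji : j ≤ i + 1
      · exact (hd'' j h1 i (Fc k i) (hFc k i)).1 hji
      · rw [hz'' j i (Nat.not_le.mp hji) k]
        exact (Wg _).zero_mem
  -- the F_k as finite sums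
  have hF : ∀ k, (∑ᶠ i, Fc k i) = ∑ i ∈ Finset.range (N + 1), Fc k i := by
    intro k
    apply finsum_eq_sum_of_support_subset
    intro i hi
    have : Fc k i ≠ 0 := hi
    exact Finset.mem_coe.mpr (Finset.mem_range.mpr (by have := hN k i this; omega))
  have hDEk : ∀ k, DE (PolynomialModule.single ℝ k (∑ᶠ i, Fc k i))
      = ∑ j ∈ Finset.range (N + 2),
          PolynomialModule.single ℝ (j + k) (d' j (∑ᶠ i, Fc k i) + d'' j (∑ᶠ i, Fc k i)) := by
    intro k
    rw [hDE k]
    apply finsum_eq_sum_of_support_subset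
    intro j hj
    have hj' : PolynomialModule.single ℝ (j + k) (d' j (∑ᶠ i, Fc k i) + d'' j (∑ᶠ i, Fc k i)) ≠ 0 := hj
    by_contra hjJ
    refine hj' ?_
    have hjN : N + 2 ≤ j := by
      by_contra h2
      exact hjJ (Finset.mem_coe.mpr (Finset.mem_range.mpr (by omega)))
    rw [hF k]
    have e1 : d' j (∑ i ∈ Finset.range (N + 1), Fc k i) = 0 := by
      rw [map_sum]
      exact Finset.sum_eq_zero fun i hi =>
        hz' j i (by have := Finset.mem_range.mp hi; omega) k
    have e2 : d'' j (∑ i ∈ Finset.range (N + 1), Fc k i) = 0 := by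
      rw [map_sum]
      exact Finset.sum_eq_zero fun i hi =>
        hz'' j i (by have := Finset.mem_range.mp hi; omega) k
    rw [e1, e2, add_zero, PolynomialModule.single_zero]
  have hE2 : (∑ k ∈ Finset.range (n + 1), ∑ j ∈ Finset.range (N + 2),
      PolynomialModule.single ℝ (j + k)
        (∑ i ∈ Finset.range (N + 1), (d' j (Fc k i) + d'' j (Fc k i)))) = 0 := by
    have h0 : ∑ k ∈ Finset.range (n + 1), DE (PolynomialModule.single ℝ k (∑ᶠ i, Fc k i)) = 0 := by
      rw [← map_sum, hE]
    rw [← h0]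
    refine Finset.sum_congr rfl fun k _ => ?_
    rw [hDEk k]
    refine Finset.sum_congr rfl fun j _ => ?_
    refine congrArg (PolynomialModule.single ℝ (j + k)) ?_
    rw [hF k, map_sum, map_sum, ← Finset.sum_add_distrib]
  have hcoeff : ∀ m : ℕ, (∑ k ∈ Finset.range (n + 1), ∑ j ∈ Finset.range (N + 2),
      if j + k = m then ∑ i ∈ Finset.range (N + 1), (d' j (Fc k i) + d'' j (Fc k i)) else 0)
      = 0 := by
    intro m
    have h1 := DFunLike.congr_fun (congrArg PolynomialModule.coeff hE2) m
    rw [pm_sum_apply] at h1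
    calc (∑ k ∈ Finset.range (n + 1), ∑ j ∈ Finset.range (N + 2),
        if j + k = m then ∑ i ∈ Finset.range (N + 1), (d' j (Fc k i) + d'' j (Fc k i)) else 0)
        = ∑ k ∈ Finset.range (n + 1), (∑ j ∈ Finset.range (N + 2),
            PolynomialModule.single ℝ (j + k)
              (∑ i ∈ Finset.range (N + 1), (d' j (Fc k i) + d'' j (Fc k i)))).coeff m := by
          refine Finset.sum_congr rfl fun k _ => ?_
          rw [pm_sum_apply]
          exact Finset.sum_congr rfl fun j _ =>
            (by rw [PolynomialModule.coeff_single, Finsupp.single_apply])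
      _ = (0 : PolynomialModule ℝ W).coeff m := h1
      _ = 0 := rfl
  -- graded projections
  obtain ⟨π, hπ⟩ := pi_exists Wg hWg
  have hσ : ∀ q, q < N + 2 → ∀ v, v ∈ Wg q → (∑ p ∈ Finset.range (N + 2), π p v) = v := by
    intro q hq v hv
    rw [Finset.sum_eq_single_of_mem q (Finset.mem_range.mpr hq)
      (fun p _ hpq => by rw [hπ p q v hv, if_neg (Ne.symm hpq)])]
    rw [hπ q q v hv, if_pos rfl]
  -- expansion of the differential applied to x
  have expand : ∀ j, t • d' j x + d'' j x
      = ∑ k ∈ Finset.range (n + 1), ∑ i ∈ Finset.range (N + 1),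
          ((t * t ^ (N - i - k)) • d' j (Fc k i) + t ^ (N - i - k) • d'' j (Fc k i)) := by
    intro j
    rw [hxdef, map_sum, map_sum, Finset.smul_sum, ← Finset.sum_add_distrib]
    refine Finset.sum_congr rfl fun k _ => ?_
    rw [map_sum, map_sum, Finset.smul_sum, ← Finset.sum_add_distrib]
    refine Finset.sum_congr rfl fun i _ => ?_
    rw [map_smul, map_smul, smul_smul]
  have hzx' : ∀ j, N + 2 ≤ j → d' j x = 0 := by
    intro j hj
    rw [hxdef, map_sum]
    refine Finset.sum_eq_zero fun k _ => ?_
    rw [map_sum]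
    refine Finset.sum_eq_zero fun i hi => ?_
    rw [map_smul, hz' j i (by have := Finset.mem_range.mp hi; omega) k, smul_zero]
  have hzx'' : ∀ j, N + 2 ≤ j → d'' j x = 0 := by
    intro j hj
    rw [hxdef, map_sum]
    refine Finset.sum_eq_zero fun k _ => ?_
    rw [map_sum]
    refine Finset.sum_eq_zero fun i hi => ?_
    rw [map_smul, hz'' j i (by have := Finset.mem_range.mp hi; omega) k, smul_zero]
  have hsupp : (Function.support fun j => t • d' j x + d'' j x)
      ⊆ ↑(Finset.range (N + 2)) := by
    intro j hj
    have hj' : t • d' j x + d'' j x ≠ 0 := hj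
    by_contra hjJ
    refine hj' ?_
    have hjN : N + 2 ≤ j := by
      by_contra h2
      exact hjJ (Finset.mem_coe.mpr (Finset.mem_range.mpr (by omega)))
    rw [hzx' j hjN, hzx'' j hjN, smul_zero, add_zero]
  rw [finsum_eq_sum_of_support_subset _ hsupp]
  have hGS : (∑ j ∈ Finset.range (N + 2), (t • d' j x + d'' j x))
      = ∑ j ∈ Finset.range (N + 2), ∑ k ∈ Finset.range (n + 1), ∑ i ∈ Finset.range (N + 1),
          ((t * t ^ (N - i - k)) • d' j (Fc k i) + t ^ (N - i - k) • d'' j (Fc k i)) :=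
    Finset.sum_congr rfl fun j _ => expand j
  rw [hGS]
  set y : W := ∑ j ∈ Finset.range (N + 2), ∑ k ∈ Finset.range (n + 1),
      ∑ i ∈ Finset.range (N + 1),
        ((t * t ^ (N - i - k)) • d' j (Fc k i) + t ^ (N - i - k) • d'' j (Fc k i)) with hy
  have h2 : (∑ p ∈ Finset.range (N + 2), π p y) = y := by
    rw [← LinearMap.sum_apply]
    rw [hy, map_sum]
    refine Finset.sum_congr rfl fun j _ => ?_
    rw [map_sum]
    refine Finset.sum_congr rfl fun k _ => ?_
    rw [map_sum]
    refine Finset.sum_congr rfl fun i hi => ?_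
    have hiN : i < N + 1 := Finset.mem_range.mp hi
    rw [map_add, map_smul, map_smul, LinearMap.sum_apply, LinearMap.sum_apply,
      hσ (i - j) (by omega) _ (hmem' j k i), hσ (i + 1 - j) (by omega) _ (hmem'' j k i)]
  have h1 : ∀ p ∈ Finset.range (N + 2), π p y = 0 := by
    intro p hp
    have hπd' : ∀ j k i, π p (d' j (Fc k i))
        = if i - j = p ∧ j ≤ i then d' j (Fc k i) else 0 := by
      intro j k i
      by_cases hji : j ≤ i
      · rw [hπ p (i - j) _ (hmem' j k i)]
        by_cases hip : i - j = p
        · rw [if_pos hip, if_pos ⟨hip, hji⟩]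
        · rw [if_neg hip, if_neg fun h => hip h.1]
      · rw [hz' j i (Nat.not_le.mp hji) k, map_zero, if_neg fun h => hji h.2]
    have hπd'' : ∀ j k i, π p (d'' j (Fc k i))
        = if i + 1 - j = p ∧ j ≤ i + 1 then d'' j (Fc k i) else 0 := by
      intro j k i
      by_cases hji : j ≤ i + 1
      · rw [hπ p (i + 1 - j) _ (hmem'' j k i)]
        by_cases hip : i + 1 - j = p
        · rw [if_pos hip, if_pos ⟨hip, hji⟩]
        · rw [if_neg hip, if_neg fun h => hip h.1]
      · rw [hz'' j i (Nat.not_le.mp hji) k, map_zero, if_neg fun h => hji h.2]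
    have hc : ∀ m : ℕ, (∑ k ∈ Finset.range (n + 1), ∑ j ∈ Finset.range (N + 2),
        if j + k = m then
          ∑ i ∈ Finset.range (N + 1), (π p (d' j (Fc k i)) + π p (d'' j (Fc k i)))
        else 0) = 0 := by
      intro m
      calc (∑ k ∈ Finset.range (n + 1), ∑ j ∈ Finset.range (N + 2),
          if j + k = m then
            ∑ i ∈ Finset.range (N + 1), (π p (d' j (Fc k i)) + π p (d'' j (Fc k i)))
          else 0)
          = π p (∑ k ∈ Finset.range (n + 1), ∑ j ∈ Finset.range (N + 2),
              if j + k = m then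
                ∑ i ∈ Finset.range (N + 1), (d' j (Fc k i) + d'' j (Fc k i))
              else 0) := by
            rw [map_sum]
            refine Finset.sum_congr rfl fun k _ => ?_
            rw [map_sum]
            refine Finset.sum_congr rfl fun j _ => ?_
            rw [apply_ite (π p), map_zero, map_sum]
            exact if_congr Iff.rfl
              (Finset.sum_congr rfl fun i _ => (map_add _ _ _).symm) rfl
        _ = 0 := by rw [hcoeff m, map_zero]
    calc π p y
        = ∑ j ∈ Finset.range (N + 2), ∑ k ∈ Finset.range (n + 1), ∑ i ∈ Finset.range (N + 1),
            ((t * t ^ (N - i - k)) • π p (d' j (Fc k i))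
              + t ^ (N - i - k) • π p (d'' j (Fc k i))) := by
          rw [hy, map_sum]
          refine Finset.sum_congr rfl fun j _ => ?_
          rw [map_sum]
          refine Finset.sum_congr rfl fun k _ => ?_
          rw [map_sum]
          refine Finset.sum_congr rfl fun i _ => ?_
          rw [map_add, map_smul, map_smul]
      _ = ∑ k ∈ Finset.range (n + 1), ∑ j ∈ Finset.range (N + 2), ∑ i ∈ Finset.range (N + 1),
            ((t * t ^ (N - i - k)) • π p (d' j (Fc k i))
              + t ^ (N - i - k) • π p (d'' j (Fc k i))) := Finset.sum_comm
      _ = ∑ k ∈ Finset.range (n + 1), ∑ j ∈ Finset.range (N + 2),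
            t ^ (N + 1 - p - (j + k)) •
              ∑ i ∈ Finset.range (N + 1), (π p (d' j (Fc k i)) + π p (d'' j (Fc k i))) := by
          refine Finset.sum_congr rfl fun k hk => Finset.sum_congr rfl fun j hj => ?_
          rw [Finset.smul_sum]
          refine Finset.sum_congr rfl fun i hi => ?_
          rw [smul_add]
          have hiN : i < N + 1 := Finset.mem_range.mp hi
          have hkn : k < n + 1 := Finset.mem_range.mp hk
          have hjN : j < N + 2 := Finset.mem_range.mp hj
          congr 1
          · rw [hπd' j k i]
            split_ifs with h
            · by_cases hF0 : Fc k i = 0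
              · rw [hF0, map_zero, smul_zero, smul_zero]
              · have hik := hN k i hF0
                rw [show N + 1 - p - (j + k) = (N - i - k) + 1 by omega, pow_succ']
            · rw [smul_zero, smul_zero]
          · rw [hπd'' j k i]
            split_ifs with h
            · by_cases hF0 : Fc k i = 0
              · rw [hF0, map_zero, smul_zero, smul_zero]
              · have hik := hN k i hF0
                rw [show N + 1 - p - (j + k) = N - i - k by omega]
            · rw [smul_zero, smul_zero]
      _ = ∑ k ∈ Finset.range (n + 1), ∑ j ∈ Finset.range (N + 2),
            ∑ m ∈ Finset.range (N + n + 2),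
              (if j + k = m then
                t ^ (N + 1 - p - m) •
                  ∑ i ∈ Finset.range (N + 1), (π p (d' j (Fc k i)) + π p (d'' j (Fc k i)))
              else 0) := by
          refine Finset.sum_congr rfl fun k hk => Finset.sum_congr rfl fun j hj => ?_
          have hm : j + k ∈ Finset.range (N + n + 2) := Finset.mem_range.mpr (by
            have := Finset.mem_range.mp hk
            have := Finset.mem_range.mp hj
            omega)
          rw [Finset.sum_eq_single_of_mem (j + k) hm
            (fun m _ hm' => if_neg fun h => hm' h.symm), if_pos rfl]
      _ = ∑ k ∈ Finset.range (n + 1), ∑ m ∈ Finset.range (N + n + 2),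
            ∑ j ∈ Finset.range (N + 2),
              (if j + k = m then
                t ^ (N + 1 - p - m) •
                  ∑ i ∈ Finset.range (N + 1), (π p (d' j (Fc k i)) + π p (d'' j (Fc k i)))
              else 0) := Finset.sum_congr rfl fun k _ => Finset.sum_comm
      _ = ∑ m ∈ Finset.range (N + n + 2), ∑ k ∈ Finset.range (n + 1),
            ∑ j ∈ Finset.range (N + 2),
              (if j + k = m then
                t ^ (N + 1 - p - m) •
                  ∑ i ∈ Finset.range (N + 1), (π p (d' j (Fc k i)) + π p (d'' j (Fc k i)))
              else 0) := Finset.sum_comm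
      _ = ∑ m ∈ Finset.range (N + n + 2),
            t ^ (N + 1 - p - m) •
              ∑ k ∈ Finset.range (n + 1), ∑ j ∈ Finset.range (N + 2),
                (if j + k = m then
                  ∑ i ∈ Finset.range (N + 1), (π p (d' j (Fc k i)) + π p (d'' j (Fc k i)))
                else 0) := by
          refine Finset.sum_congr rfl fun m _ => ?_
          rw [Finset.smul_sum]
          refine Finset.sum_congr rfl fun k _ => ?_
          rw [Finset.smul_sum]
          refine Finset.sum_congr rfl fun j _ => ?_
          split_ifs with h
          · rfl
          · rw [smul_zero]
      _ = ∑ m ∈ Finset.range (N + n + 2), t ^ (N + 1 - p - m) • (0 : W) :=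
          Finset.sum_congr rfl fun m _ => by rw [hc m]
      _ = 0 := by simp
  rw [← h2]
  exact Finset.sum_eq_zero h1
end
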